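/- arXiv:2307.09453 — 3 statements merged into one kernel-verified Lean document; each statement's English description precedes it below -/
import Mathlib

section
/- Let N ≥ 3 be odd, (S,E) the cycle of length N, Vbar = V/(F·e_S), and fix an edge ee in E. Let B in phi(Vbar). If [ee] lies in L_B, then supp(B) ∩ ee = ∅ and |B| = (N−1)/2. -/
/-- The induced subgraph of `adj` on `I` is a path (type `A_m`, `m ≥ 1`):
there is an injective enumeration `f : Fin (m+1) → S` of `I` such that two
elements of `I` are adjacent iff they are consecutive in the enumeration. -/
def IsPathOn {S : Type} [DecidableEq S] (adj : S → S → Prop) (I : Finset S) : Prop :=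
  ∃ (m : ℕ) (f : Fin (m + 1) → S), Function.Injective f ∧
    I = Finset.image f Finset.univ ∧
    ∀ i j : Fin (m + 1), adj (f i) (f j) ↔ ((i : ℕ) + 1 = (j : ℕ) ∨ (j : ℕ) + 1 = (i : ℕ))

/-- The induced subgraph of `adj` on `I` is connected. -/
def ConnOn {S : Type} (adj : S → S → Prop) (I : Finset S) : Prop :=
  ∀ s ∈ I, ∀ t ∈ I, Relation.ReflTransGen (fun a b => a ∈ I ∧ b ∈ I ∧ adj a b) s t

/-- `I ∈ Cal_I^1`: the induced subgraph on `I` is a path and `|I|` is odd. -/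
def CalI1 {S : Type} [DecidableEq S] (adj : S → S → Prop) (I : Finset S) : Prop :=
  IsPathOn adj I ∧ Odd I.card

/-- `I ≺ I'`. -/
def Prec {S : Type} [DecidableEq S] (adj : S → S → Prop) (I I' : Finset S) : Prop :=
  I ⊂ I' ∧ ¬ ConnOn adj (I' \ I)

/-- `I ♠ I'`. -/
def Spade {S : Type} [DecidableEq S] (adj : S → S → Prop) (I I' : Finset S) : Prop :=
  I ∩ I' = ∅ ∧ ¬ ConnOn adj (I ∪ I')

/-- `I^{ev}`: the set of `s ∈ I` such that `I ∖ {s}` is the disjoint union of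
`I', I'' ∈ Cal_I^1` with `I' ♠ I''`. -/
def Iev {S : Type} [DecidableEq S] (adj : S → S → Prop) (I : Finset S) : Set S :=
  {s | s ∈ I ∧ ∃ I' I'' : Finset S, CalI1 adj I' ∧ CalI1 adj I'' ∧
    Spade adj I' I'' ∧ I.erase s = I' ∪ I''}

/-- Property (P0). -/
def P0 {S : Type} [DecidableEq S] (adj : S → S → Prop) (B : Finset (Finset S)) : Prop :=
  ∀ I ∈ B, ∀ I' ∈ B, I = I' ∨ Spade adj I I' ∨ Prec adj I I' ∨ Prec adj I' I

/-- Property (P1). -/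
def P1 {S : Type} [DecidableEq S] (adj : S → S → Prop) (B : Finset (Finset S)) : Prop :=
  ∀ I ∈ B, ∃ (k : ℕ) (f : Fin k → Finset S),
    (∀ j, f j ∈ B ∧ Prec adj (f j) I) ∧
    (∀ j j', j ≠ j' → Disjoint (f j) (f j')) ∧
    Iev adj I ⊆ ⋃ j, ((f j : Finset S) : Set S)

/-- `phi`: finite sets `B` of elements of `Cal_I^1` satisfying (P0) and (P1). -/
def phiSet {S : Type} [DecidableEq S] (adj : S → S → Prop) : Set (Finset (Finset S)) :=
  {B | (∀ I ∈ B, CalI1 adj I) ∧ P0 adj B ∧ P1 adj B}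

/-- `supp(B)`. -/
def suppB {S : Type} [DecidableEq S] (B : Finset (Finset S)) : Finset S := B.biUnion id

/-- `g_s(B)`. -/
def gs {S : Type} [DecidableEq S] (B : Finset (Finset S)) (s : S) : ℕ :=
  (B.filter (fun I => s ∈ I)).card

/-- `e_I = ∑_{s ∈ I} e_s`. -/
def eSum {S : Type} {V : Type} [AddCommGroup V] [Module (ZMod 2) V]
    (e : S → V) (I : Finset S) : V := ∑ s ∈ I, e s

/-- `L_B`: the `F`-span of `{e_I : I ∈ B}`. -/
def LB {S : Type} {V : Type} [AddCommGroup V] [Module (ZMod 2) V]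
    (e : S → V) (B : Finset (Finset S)) : Submodule (ZMod 2) V :=
  Submodule.span (ZMod 2) ((fun I => eSum e I) '' (B : Set (Finset S)))

/-- `eps(B) = ∑_{s ∈ S} ((g_s(B)(g_s(B)+1)/2) mod 2) e_s`. -/
def epsB {S : Type} [DecidableEq S] [Fintype S] {V : Type} [AddCommGroup V]
    [Module (ZMod 2) V] (e : S → V) (B : Finset (Finset S)) : V :=
  ∑ s : S, ((gs B s * (gs B s + 1) / 2 : ℕ) : ZMod 2) • e s

/-- The triple `(V, <,>, e)` (with graph `adj`) is perfect. -/
def IsPerfect {S : Type} [DecidableEq S] [Fintype S] {V : Type} [AddCommGroup V]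
    [Module (ZMod 2) V] (adj : S → S → Prop) (e : S → V) : Prop :=
  (∀ B ∈ phiSet adj,
      (LinearIndependent (ZMod 2) (fun I : {I : Finset S // I ∈ B} => eSum e I.1)) ∧
      (∀ I : Finset S, CalI1 adj I → (eSum e I ∈ LB e B ↔ I ∈ B))) ∧
  (∀ B ∈ phiSet adj, epsB e B ∈ LB e B) ∧
  Set.BijOn (epsB e) (phiSet adj) (⋃ B ∈ phiSet adj, ((LB e B : Submodule (ZMod 2) V) : Set V)) ∧
  (∀ B ∈ phiSet adj, ∀ B' ∈ phiSet adj, epsB e B' ∈ LB e B → ∀ s : S, gs B' s ≤ gs B s)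
/-- Adjacency of the cycle of length `N` on `S = ZMod N`. -/
def cadj (N : ℕ) (i j : ZMod N) : Prop := j = i + 1 ∨ i = j + 1

/-- `V = F^S` for `S = ZMod N`. -/
abbrev Vc (N : ℕ) := ZMod N → ZMod 2

/-- The standard basis vector `e_s`. -/
def eVec (N : ℕ) (s : ZMod N) : Vc N := Pi.single s 1

/-- The line `F·e_S`, where `e_S = ∑_{s ∈ S} e_s`. -/
def radN (N : ℕ) [NeZero N] : Submodule (ZMod 2) (Vc N) :=
  Submodule.span (ZMod 2) {eSum (eVec N) Finset.univ}

/-- `Vbar = V / (F·e_S)`. -/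
abbrev VbarN (N : ℕ) [NeZero N] := Vc N ⧸ radN N

/-- The quotient map `pi : V → Vbar`. -/
def piQ (N : ℕ) [NeZero N] : Vc N →ₗ[ZMod 2] VbarN N := (radN N).mkQ

/-- `ebar_s = pi(e_s)`. -/
def ebar (N : ℕ) [NeZero N] (s : ZMod N) : VbarN N := piQ N (eVec N s)
open scoped Classical in
/-- The connected component of `s` in the induced subgraph of `adj` on `I`. -/
noncomputable def compOf {S : Type} [DecidableEq S] (adj : S → S → Prop)
    (I : Finset S) (s : S) : Finset S :=
  I.filter (fun t => Relation.ReflTransGen (fun a b => a ∈ I ∧ b ∈ I ∧ adj a b) s t)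

/-- `c(I)`: the set of vertex sets of connected components of the induced subgraph on `I`. -/
noncomputable def comps {S : Type} [DecidableEq S] (adj : S → S → Prop)
    (I : Finset S) : Finset (Finset S) :=
  I.image (compOf adj I)

/-- `|c^0(I)|`: the number of connected components of even cardinality. -/
noncomputable def c0card {S : Type} [DecidableEq S] (adj : S → S → Prop)
    (I : Finset S) : ℕ :=
  ((comps adj I).filter (fun C => Even C.card)).card

/-- `V_0 = {e_I : I ⊊ S with |c^0(I)| even}`. -/
def V0set (N : ℕ) [NeZero N] : Set (Vc N) :=
  {v | ∃ I : Finset (ZMod N), I ≠ Finset.univ ∧ Even (c0card (cadj N) I) ∧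
    v = eSum (eVec N) I}

/-- `V_1 = {e_S} ∪ {e_I : ∅ ≠ I ⊊ S with |c^0(I)| odd}`. -/
def V1set (N : ℕ) [NeZero N] : Set (Vc N) :=
  {v | v = eSum (eVec N) Finset.univ ∨ ∃ I : Finset (ZMod N), I ≠ ∅ ∧ I ≠ Finset.univ ∧
    Odd (c0card (cadj N) I) ∧ v = eSum (eVec N) I}
open scoped Classical in
/-- `I^{odd} = I ∖ I^{ev}` (as a `Finset`). -/
noncomputable def IoddF {S : Type} [DecidableEq S] (adj : S → S → Prop)
    (I : Finset S) : Finset S :=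
  I.filter (fun s => s ∉ Iev adj I)

/-- `n_B = |{I ∈ B : ee ⊆ I}|`. -/
def nB {S : Type} [DecidableEq S] (ee : Finset S) (B : Finset (Finset S)) : ℕ :=
  (B.filter (fun I => ee ⊆ I)).card

open scoped Classical in
/-- `B ↦ B^!`: remove the unique `I_B ∈ B` with `|I_B ∩ ee| = 1` when `n_B` is odd;
leave `B` unchanged when `n_B` is even. -/
noncomputable def bangF {S : Type} [DecidableEq S] (ee : Finset S)
    (B : Finset (Finset S)) : Finset (Finset S) :=
  if h : Odd (nB ee B) ∧ ∃ I ∈ B, (I ∩ ee).card = 1 then B.erase h.2.choose else B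

/-- `omega = {B^! : B ∈ phi}`. -/
def omegaSet {S : Type} [DecidableEq S] (adj : S → S → Prop) (ee : Finset S) :
    Set (Finset (Finset S)) :=
  (bangF ee) '' (phiSet adj)

open scoped Classical in
/-- `Btilde`: the unique element of `phi` with `Btilde^! = B`. -/
noncomputable def tildeF {S : Type} [DecidableEq S] (adj : S → S → Prop) (ee : Finset S)
    (C : Finset (Finset S)) : Finset (Finset S) :=
  if h : ∃ B ∈ phiSet adj, bangF ee B = C then h.choose else ∅

/-- `'eps(B) = eps(Btilde)`. -/
noncomputable def epsO {S : Type} [DecidableEq S] [Fintype S] {V : Type} [AddCommGroup V]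
    [Module (ZMod 2) V] (adj : S → S → Prop) (ee : Finset S) (e : S → V)
    (C : Finset (Finset S)) : V :=
  epsB e (tildeF adj ee C)

/-- `B' ⪯ B` on `omega`. -/
def preceqO {S : Type} [DecidableEq S] [Fintype S] {V : Type} [AddCommGroup V]
    [Module (ZMod 2) V] (adj : S → S → Prop) (ee : Finset S) (e : S → V)
    (B' B : Finset (Finset S)) : Prop :=
  ∃ (k : ℕ) (c : ℕ → Finset (Finset S)), c 0 = B' ∧ c k = B ∧
    (∀ i ≤ k, c i ∈ omegaSet adj ee) ∧
    (∀ i < k, epsO adj ee e (c i) ∈ LB e (c (i + 1)))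

/-- The linear form `v ↦ v t + v t'` on `V`. -/
def zeeV (N : ℕ) (t t' : ZMod N) : Vc N →ₗ[ZMod 2] ZMod 2 :=
  (LinearMap.proj t : Vc N →ₗ[ZMod 2] ZMod 2) + (LinearMap.proj t' : Vc N →ₗ[ZMod 2] ZMod 2)

/-- `z_ee : Vbar → F`, the linear map with `z_ee(ebar_s) = 1` iff `s ∈ ee = {t,t'}`. -/
noncomputable def zee (N : ℕ) [NeZero N] (t t' : ZMod N) : VbarN N →ₗ[ZMod 2] ZMod 2 :=
  Submodule.liftQ (radN N) (zeeV N t t') (by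
    rw [radN, Submodule.span_le, Set.singleton_subset_iff]
    have h1 : ∀ u : ZMod N, (eSum (eVec N) Finset.univ) u = 1 := by
      intro u
      simp [eSum, eVec, Finset.sum_apply, Finset.sum_pi_single]
    simp only [SetLike.mem_coe, LinearMap.mem_ker, zeeV, LinearMap.add_apply,
      LinearMap.proj_apply, h1]
    decide)
/-- The maximal elements of a finite family of finsets, under inclusion. -/
def maxElts {S : Type} [DecidableEq S] (C : Finset (Finset S)) : Finset (Finset S) :=
  C.filter (fun I => ∀ I' ∈ C, ¬ I ⊂ I')

/-- `restB B k = B ∖ (B_1 ∪ … ∪ B_k)`: what remains of `B` after removing the first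
`k` layers; the `k`-th layer (`k ≥ 1`) is `B_k = maxElts (restB B (k-1))`. -/
def restB {S : Type} [DecidableEq S] (B : Finset (Finset S)) : ℕ → Finset (Finset S)
  | 0 => B
  | k + 1 => restB B k \ maxElts (restB B k)

/-- The relation `B' ≤ B` on `phi(V)`. -/
def lePhi {S : Type} [DecidableEq S] [Fintype S] {V : Type} [AddCommGroup V]
    [Module (ZMod 2) V] (adj : S → S → Prop) (e : S → V)
    (B' B : Finset (Finset S)) : Prop :=
  ∃ (k : ℕ) (c : ℕ → Finset (Finset S)), c 0 = B' ∧ c k = B ∧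
    (∀ i ≤ k, c i ∈ phiSet adj) ∧
    (∀ i < k, epsB e (c i) ∈ LB e (c (i + 1)))
namespace St13
open Finset

variable {N : ℕ}

/-- The arc `{a, a+1, ..., a+L-1}` in `ZMod N`. -/
def arcF (N : ℕ) (a : ZMod N) (L : ℕ) : Finset (ZMod N) :=
  (Finset.range L).image (fun i : ℕ => a + (i : ZMod N))

lemma castInj [NeZero N] {i j : ℕ} (hi : i < N) (hj : j < N) (h : (i : ZMod N) = j) : i = j := by
  rw [← ZMod.val_cast_of_lt hi, ← ZMod.val_cast_of_lt hj, h]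

lemma addCast (a : ZMod N) (c j : ℕ) : a + (c : ZMod N) + (j : ZMod N) = a + ((c + j : ℕ) : ZMod N) := by
  push_cast; ring

lemma mem_arcF {a x : ZMod N} {L : ℕ} : x ∈ arcF N a L ↔ ∃ i, i < L ∧ x = a + (i : ZMod N) := by
  simp [arcF, eq_comm]

lemma offset_eqZ [NeZero N] {a : ZMod N} {i j : ℕ} (hi : i < N) (hj : j < N)
    (h : a + (i : ZMod N) = a + (j : ZMod N)) : i = j :=
  castInj hi hj (by exact add_left_cancel h)

lemma mem_arcF_iff [NeZero N] {a : ZMod N} {L i : ℕ} (hL : L ≤ N) (hi : i < N) :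
    a + (i : ZMod N) ∈ arcF N a L ↔ i < L := by
  rw [mem_arcF]
  constructor
  · rintro ⟨j, hj, hx⟩
    rwa [offset_eqZ hi (lt_of_lt_of_le hj hL) hx]
  · intro h; exact ⟨i, h, rfl⟩

lemma card_arcF [NeZero N] {L : ℕ} (hL : L ≤ N) (a : ZMod N) : (arcF N a L).card = L := by
  rw [arcF, Finset.card_image_of_injOn, Finset.card_range]
  intro i hi j hj h
  simp only [Finset.mem_coe, Finset.mem_range] at hi hj
  exact offset_eqZ (lt_of_lt_of_le hi hL) (lt_of_lt_of_le hj hL) h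

lemma arcF_zero (a : ZMod N) : arcF N a 0 = ∅ := by simp [arcF]

lemma arcF_one (a : ZMod N) : arcF N a 1 = {a} := by
  simp [arcF, Finset.range_one]

lemma self_mem_arcF {a : ZMod N} {L : ℕ} (hL : 1 ≤ L) : a ∈ arcF N a L :=
  mem_arcF.2 ⟨0, hL, by simp⟩

lemma arcF_nonempty {a : ZMod N} {L : ℕ} (hL : 1 ≤ L) : (arcF N a L).Nonempty :=
  ⟨a, self_mem_arcF hL⟩

/-- adjacency to successor always holds -/
lemma cadj_succ (x : ZMod N) : cadj N x (x + 1) := Or.inl rfl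

lemma cadj_symm {x y : ZMod N} (h : cadj N x y) : cadj N y x := h.symm

lemma cast_succ_eq [NeZero N] {i j : ℕ} (hi : i < N) (hj : j < N) :
    ((j : ZMod N) = (i : ZMod N) + 1) ↔ (j = i + 1 ∨ (j = 0 ∧ i = N - 1)) := by
  have hNpos : 0 < N := Nat.pos_of_ne_zero (NeZero.ne N)
  have h1 : (i : ZMod N) + 1 = ((i + 1 : ℕ) : ZMod N) := by push_cast; ring
  rw [h1]
  by_cases hiN : i + 1 = N
  · have : ((i + 1 : ℕ) : ZMod N) = ((0 : ℕ) : ZMod N) := by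
      rw [hiN]; simp [ZMod.natCast_self]
    rw [this]
    constructor
    · intro h; have := castInj hj hNpos h; omega
    · rintro (h | ⟨h0, _⟩); · omega
      · rw [h0]
  · constructor
    · intro h; have := castInj hj (by omega) h; omega
    · rintro (h | ⟨h0, hi1⟩); · rw [h]
      · omega

lemma cadj_iff [NeZero N] {i j : ℕ} (hi : i < N) (hj : j < N) (a : ZMod N) :
    cadj N (a + (i : ZMod N)) (a + (j : ZMod N)) ↔
      (j = i + 1 ∨ i = j + 1 ∨ (j = 0 ∧ i = N - 1) ∨ (i = 0 ∧ j = N - 1)) := by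
  unfold cadj
  have e1 : a + (i : ZMod N) + 1 = a + ((i : ZMod N) + 1) := by ring
  have e2 : a + (j : ZMod N) + 1 = a + ((j : ZMod N) + 1) := by ring
  rw [e1, e2, add_right_inj, add_right_inj, cast_succ_eq hi hj, cast_succ_eq hj hi]
  tauto

end St13
namespace St13
open Finset

variable {N : ℕ}

/-- induced-adjacency relation on a finset -/
def indR (N : ℕ) (X : Finset (ZMod N)) (x y : ZMod N) : Prop :=
  x ∈ X ∧ y ∈ X ∧ cadj N x y

lemma indR_symm {X : Finset (ZMod N)} : Symmetric (indR N X) :=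
  fun _ _ ⟨h1, h2, h3⟩ => ⟨h2, h1, cadj_symm h3⟩

lemma connOn_iff {X : Finset (ZMod N)} :
    ConnOn (cadj N) X ↔ ∀ s ∈ X, ∀ t ∈ X, Relation.ReflTransGen (indR N X) s t := Iff.rfl

lemma rtg_mono {X Y : Finset (ZMod N)} (h : X ⊆ Y) {u v : ZMod N}
    (huv : Relation.ReflTransGen (indR N X) u v) : Relation.ReflTransGen (indR N Y) u v :=
  Relation.ReflTransGen.mono (r := indR N X) (p := indR N Y)
    (by intro a b h'; exact ⟨h h'.1, h h'.2.1, h'.2.2⟩) u v huv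

lemma rtg_arc_step [NeZero N] {a : ZMod N} {L : ℕ} :
    ∀ d i : ℕ, i + d < L →
      Relation.ReflTransGen (indR N (arcF N a L)) (a + (i : ZMod N)) (a + ((i + d : ℕ) : ZMod N)) := by
  intro d
  induction d with
  | zero => intro i h; simpa using Relation.ReflTransGen.refl
  | succ d ih =>
    intro i h
    have h1 : i + d < L := by omega
    refine (ih i h1).tail ?_
    refine ⟨mem_arcF.2 ⟨i + d, h1, rfl⟩, mem_arcF.2 ⟨i + d + 1, by omega, by push_cast; ring⟩, ?_⟩
    have : a + ((i + (d+1) : ℕ) : ZMod N) = (a + ((i + d : ℕ) : ZMod N)) + 1 := by push_cast; ring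
    rw [this]
    exact cadj_succ _

lemma connOn_arcF [NeZero N] (a : ZMod N) (L : ℕ) : ConnOn (cadj N) (arcF N a L) := by
  intro s hs t ht
  obtain ⟨i, hi, rfl⟩ := mem_arcF.1 hs
  obtain ⟨j, hj, rfl⟩ := mem_arcF.1 ht
  rcases le_total i j with h | h
  · have := rtg_arc_step (N := N) (a := a) (L := L) (j - i) i (by omega)
    rwa [Nat.add_sub_cancel' h] at this
  · have := rtg_arc_step (N := N) (a := a) (L := L) (i - j) j (by omega)
    rw [Nat.add_sub_cancel' h] at this
    exact (by haveI hsy : Std.Symm (indR N (arcF N a L)) := ⟨fun _ _ h => indR_symm h⟩; exact (Relation.ReflTransGen.symmetric (r := indR N (arcF N a L))).symm _ _ this)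

lemma rtg_stay {X Y : Finset (ZMod N)}
    (hNA : ∀ x ∈ X, ∀ y ∈ Y, ¬ cadj N x y) {u v : ZMod N}
    (h : Relation.ReflTransGen (indR N (X ∪ Y)) u v) (hu : u ∈ X) (hd : ∀ x, ¬(x ∈ X ∧ x ∈ Y)) :
    v ∈ X := by
  induction h with
  | refl => exact hu
  | tail _ step ih =>
    obtain ⟨h1, h2, h3⟩ := step
    rcases Finset.mem_union.1 h2 with h | h
    · exact h
    · exact absurd h3 (hNA _ ih _ h)

lemma not_connOn_sep {X Y : Finset (ZMod N)} {x y : ZMod N}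
    (hNA : ∀ x ∈ X, ∀ y ∈ Y, ¬ cadj N x y)
    (hd : ∀ z, ¬(z ∈ X ∧ z ∈ Y)) (hx : x ∈ X) (hy : y ∈ Y) :
    ¬ ConnOn (cadj N) (X ∪ Y) := by
  intro h
  have := h x (Finset.mem_union_left _ hx) y (Finset.mem_union_right _ hy)
  have := rtg_stay hNA this hx hd
  exact hd y ⟨this, hy⟩

lemma connOn_union_of_adj {X Y : Finset (ZMod N)} {x y : ZMod N}
    (hX : ConnOn (cadj N) X) (hY : ConnOn (cadj N) Y)
    (hx : x ∈ X) (hy : y ∈ Y) (hadj : cadj N x y) :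
    ConnOn (cadj N) (X ∪ Y) := by
  have cross : Relation.ReflTransGen (indR N (X ∪ Y)) x y :=
    Relation.ReflTransGen.single ⟨Finset.mem_union_left _ hx, Finset.mem_union_right _ hy, hadj⟩
  intro u hu v hv
  rcases Finset.mem_union.1 hu with hu' | hu' <;> rcases Finset.mem_union.1 hv with hv' | hv'
  · exact rtg_mono Finset.subset_union_left (hX u hu' v hv')
  · exact ((rtg_mono Finset.subset_union_left (hX u hu' x hx)).trans cross).trans
      (rtg_mono Finset.subset_union_right (hY y hy v hv'))
  · exact ((rtg_mono Finset.subset_union_right (hY u hu' y hy)).trans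
      (by haveI : Std.Symm (indR N (X ∪ Y)) := ⟨fun _ _ h => indR_symm h⟩; exact Relation.ReflTransGen.symmetric.symm _ _ cross)).trans
      (rtg_mono Finset.subset_union_left (hX x hx v hv'))
  · exact rtg_mono Finset.subset_union_right (hY u hu' v hv')

/-- a connected subset of a separated union lies in one side -/
lemma conn_sub {X L R : Finset (ZMod N)}
    (hconn : ConnOn (cadj N) X) (hsub : X ⊆ L ∪ R)
    (hNA : ∀ x ∈ L, ∀ y ∈ R, ¬ cadj N x y)
    {u : ZMod N} (hu : u ∈ X) (huL : u ∈ L) : X ⊆ L := by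
  intro v hv
  have h := hconn u hu v hv
  -- walk stays in L
  clear hv
  induction h with
  | refl => exact huL
  | tail _ step ih =>
    obtain ⟨h1, h2, h3⟩ := step
    rcases Finset.mem_union.1 (hsub h2) with h | h
    · exact h
    · exact absurd h3 (hNA _ ih _ h)

end St13
namespace St13
open Finset

variable {N : ℕ}

lemma isPathOn_arcF [NeZero N] (hN : 3 ≤ N) (a : ZMod N) {L : ℕ} (h1 : 1 ≤ L) (h2 : L ≤ N - 1) :
    IsPathOn (cadj N) (arcF N a L) := by
  refine ⟨L - 1, fun i => a + ((i : ℕ) : ZMod N), ?_, ?_, ?_⟩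
  · intro i j hij
    have hi : (i : ℕ) < N := by omega
    have hj : (j : ℕ) < N := by omega
    exact Fin.ext (offset_eqZ hi hj hij)
  · ext x
    rw [mem_arcF]
    simp only [Finset.mem_image, Finset.mem_univ, true_and]
    constructor
    · rintro ⟨i, hi, rfl⟩; exact ⟨⟨i, by omega⟩, rfl⟩
    · rintro ⟨i, rfl⟩; exact ⟨i, by omega, rfl⟩
  · intro i j
    have hi : (i : ℕ) < N := by omega
    have hj : (j : ℕ) < N := by omega
    rw [cadj_iff hi hj a]
    have hi' : (i : ℕ) < L := by omega
    have hj' : (j : ℕ) < L := by omega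
    constructor
    · rintro (h | h | h | h) <;> omega
    · rintro (h | h) <;> [left; right] <;> omega

lemma isPathOn_to_arc [NeZero N] (hN : 3 ≤ N) {I : Finset (ZMod N)} (h : IsPathOn (cadj N) I) :
    ∃ a, I = arcF N a I.card ∧ 1 ≤ I.card ∧ I.card ≤ N - 1 := by
  obtain ⟨m, f, hinj, hIeq, hiff⟩ := h
  have hNpos : 0 < N := by omega
  have hcard : I.card = m + 1 := by
    rw [hIeq, Finset.card_image_of_injective _ hinj, Finset.card_univ, Fintype.card_fin]
  have hmN : m + 1 ≤ N := by
    have := Fintype.card_le_of_injective f hinj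
    rwa [Fintype.card_fin, ZMod.card] at this
  -- two cases on direction
  rcases Nat.eq_zero_or_pos m with hm0 | hmpos
  · subst hm0
    refine ⟨f 0, ?_, by omega, by omega⟩
    rw [hcard, arcF_one, hIeq]
    ext x
    simp only [Finset.mem_image, Finset.mem_univ, true_and, Finset.mem_singleton]
    constructor
    · rintro ⟨i, rfl⟩
      have : i = 0 := Fin.ext (by omega)
      rw [this]
    · rintro rfl; exact ⟨0, rfl⟩
  -- m ≥ 1
  have h01 : cadj N (f 0) (f ⟨1, by omega⟩) := by
    rw [hiff]; left; simp
  have hd : f ⟨1, by omega⟩ = f 0 + 1 ∨ f ⟨1, by omega⟩ = f 0 + (-1) := by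
    rcases h01 with h | h
    · left; exact h
    · right; rw [h]; ring
  -- main claim, for d = 1 or -1
  have key : ∀ d : ZMod N, f ⟨1, by omega⟩ = f 0 + d → (d = 1 ∨ d = -1) →
      ∀ n (hn : n < m + 1), f ⟨n, hn⟩ = f 0 + (n : ZMod N) * d := by
    intro d hd1 hdpm
    intro n
    induction n using Nat.strong_induction_on with
    | _ n ih =>
      intro hn
      match n, hn with
      | 0, hn => simp
      | 1, hn => simpa using hd1
      | (k+2), hn =>
        have hk1 : k + 1 < m + 1 := by omega
        have hk : k < m + 1 := by omega
        have e1 : f ⟨k+1, hk1⟩ = f 0 + ((k+1 : ℕ) : ZMod N) * d := ih (k+1) (by omega) hk1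
        have e0 : f ⟨k, hk⟩ = f 0 + ((k : ℕ) : ZMod N) * d := ih k (by omega) hk
        have hadj : cadj N (f ⟨k+1, hk1⟩) (f ⟨k+2, hn⟩) := by
          rw [hiff]; left; simp
        have hne : f ⟨k+2, hn⟩ ≠ f ⟨k, hk⟩ := by
          intro hcon
          have := hinj hcon
          simp only [Fin.mk.injEq] at this
          omega
        rcases hdpm with rfl | rfl
        · rcases hadj with h | h
          · rw [h, e1]; push_cast; ring
          · exfalso; apply hne
            have hthis : f ⟨k+2, hn⟩ = f ⟨k+1, hk1⟩ - 1 := eq_sub_of_add_eq h.symm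
            rw [hthis, e1, e0]; push_cast; ring
        · rcases hadj with h | h
          · exfalso; apply hne
            rw [h, e1, e0]; push_cast; ring
          · have hthis : f ⟨k+2, hn⟩ = f ⟨k+1, hk1⟩ - 1 := eq_sub_of_add_eq h.symm
            rw [hthis, e1]; push_cast; ring
  -- exclude m + 1 = N
  have hdir : ∃ d : ZMod N, (d = 1 ∨ d = -1) ∧ ∀ n (hn : n < m + 1), f ⟨n, hn⟩ = f 0 + (n : ZMod N) * d := by
    rcases hd with h | h
    · exact ⟨1, Or.inl rfl, key 1 h (Or.inl rfl)⟩
    · exact ⟨-1, Or.inr rfl, key (-1) h (Or.inr rfl)⟩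
  obtain ⟨d, hdpm, hfd⟩ := hdir
  have hmN' : m + 1 ≤ N - 1 := by
    by_contra hcon
    have hmN2 : m + 1 = N := by omega
    have hm2 : 2 ≤ m := by omega
    have hfm : f ⟨m, by omega⟩ = f 0 + (m : ZMod N) * d := hfd m (by omega)
    have hmz : (m : ZMod N) = -1 := by
      have : ((m + 1 : ℕ) : ZMod N) = 0 := by rw [hmN2]; simp [ZMod.natCast_self]
      push_cast at this
      linear_combination this
    have hadj : cadj N (f 0) (f ⟨m, by omega⟩) := by
      rcases hdpm with rfl | rfl
      · right; rw [hfm, hmz]; ring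
      · left; rw [hfm, hmz]; ring
    rw [hiff] at hadj
    simp only [Fin.val_mk, Fin.val_zero] at hadj
    omega
  rcases hdpm with rfl | rfl
  · refine ⟨f 0, ?_, by omega, by omega⟩
    rw [hcard, hIeq]
    ext x
    rw [mem_arcF]
    simp only [Finset.mem_image, Finset.mem_univ, true_and]
    constructor
    · rintro ⟨i, rfl⟩
      have h := hfd (i : ℕ) i.2
      rw [Fin.eta, mul_one] at h
      exact ⟨i, i.2, h⟩
    · rintro ⟨i, hi, rfl⟩
      refine ⟨⟨i, hi⟩, ?_⟩
      rw [hfd i hi, mul_one]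
  · refine ⟨f 0 - (m : ZMod N), ?_, by omega, by omega⟩
    rw [hcard, hIeq]
    ext x
    rw [mem_arcF]
    simp only [Finset.mem_image, Finset.mem_univ, true_and]
    constructor
    · rintro ⟨i, rfl⟩
      refine ⟨m - (i : ℕ), by omega, ?_⟩
      have h := hfd (i : ℕ) i.2
      rw [Fin.eta] at h
      rw [h]
      have : ((m - (i : ℕ) : ℕ) : ZMod N) = (m : ZMod N) - ((i : ℕ) : ZMod N) := by
        rw [Nat.cast_sub (by omega)]
      rw [this]; ring
    · rintro ⟨j, hj, rfl⟩
      refine ⟨⟨m - j, by omega⟩, ?_⟩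
      rw [hfd (m - j) (by omega)]
      have : ((m - j : ℕ) : ZMod N) = (m : ZMod N) - (j : ZMod N) := by
        rw [Nat.cast_sub (by omega)]
      rw [this]; ring

lemma connOn_of_isPathOn [NeZero N] (hN : 3 ≤ N) {I : Finset (ZMod N)}
    (h : IsPathOn (cadj N) I) : ConnOn (cadj N) I := by
  obtain ⟨a, ha, -, -⟩ := isPathOn_to_arc hN h
  rw [ha]
  exact connOn_arcF a I.card


end St13
namespace St13
open Finset

variable {N : ℕ}

/-- canonical offsets of a sub-arc -/
lemma sub_arc [NeZero N] {a b : ZMod N} {L M : ℕ} (hL : L ≤ N - 1) (hM : 1 ≤ M) (hN : 3 ≤ N)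
    (hsub : arcF N b M ⊆ arcF N a L) :
    ∃ c, c + M ≤ L ∧ b = a + (c : ZMod N) := by
  have hb : b ∈ arcF N a L := hsub (self_mem_arcF hM)
  obtain ⟨c, hc, rfl⟩ := mem_arcF.1 hb
  refine ⟨c, ?_, rfl⟩
  have key : ∀ i, i < M → c + i < L := by
    intro i
    induction i with
    | zero => intro _; omega
    | succ i ih =>
      intro hi
      have hci : c + i < L := ih (by omega)
      have hmem : a + (c : ZMod N) + ((i+1 : ℕ) : ZMod N) ∈ arcF N a L :=
        hsub (mem_arcF.2 ⟨i+1, hi, rfl⟩)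
      rw [addCast] at hmem
      obtain ⟨k, hk, hx⟩ := mem_arcF.1 hmem
      have : c + (i+1) = k := offset_eqZ (by omega) (by omega) hx
      omega
  have := key (M - 1) (by omega)
  omega

/-- splitting an arc by removing a middle block -/
lemma arc_sdiff [NeZero N] {a : ZMod N} {L c M : ℕ} (h1 : c + M ≤ L) (h2 : L ≤ N) :
    arcF N a L \ arcF N (a + (c : ZMod N)) M =
      arcF N a c ∪ arcF N (a + ((c + M : ℕ) : ZMod N)) (L - (c + M)) := by
  ext x
  simp only [Finset.mem_sdiff, Finset.mem_union, mem_arcF]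
  constructor
  · rintro ⟨⟨i, hi, rfl⟩, hnot⟩
    have hJ : ¬(c ≤ i ∧ i < c + M) := by
      rintro ⟨h3, h4⟩
      exact hnot ⟨i - c, by omega, by rw [addCast]; congr 2; omega⟩
    rcases Nat.lt_or_ge i c with h | h
    · exact Or.inl ⟨i, h, rfl⟩
    · refine Or.inr ⟨i - (c + M), by omega, ?_⟩
      rw [addCast]; congr 2; omega
  · rintro (⟨i, hi, rfl⟩ | ⟨i, hi, rfl⟩)
    · refine ⟨⟨i, by omega, rfl⟩, ?_⟩
      rintro ⟨j, hj, hx⟩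
      rw [addCast] at hx
      have := offset_eqZ (N := N) (by omega) (by omega) hx
      omega
    · rw [addCast]
      refine ⟨⟨c + M + i, by omega, rfl⟩, ?_⟩
      rintro ⟨j, hj, hx⟩
      rw [addCast] at hx
      have := offset_eqZ (N := N) (by omega) (by omega) hx
      omega

/-- two separated offset-blocks of an arc are elementwise non-adjacent -/
lemma blocks_NA [NeZero N] (hN : 3 ≤ N) {a : ZMod N} {c1 L1 c2 L2 : ℕ}
    (hgap : c1 + L1 < c2) (hbound : c2 + L2 ≤ N - 1) :
    ∀ x ∈ arcF N (a + (c1 : ZMod N)) L1, ∀ y ∈ arcF N (a + (c2 : ZMod N)) L2, ¬ cadj N x y := by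
  rintro x hx y hy hadj
  obtain ⟨i, hi, rfl⟩ := mem_arcF.1 hx
  obtain ⟨j, hj, rfl⟩ := mem_arcF.1 hy
  rw [addCast, addCast] at hadj
  rw [cadj_iff (by omega) (by omega)] at hadj
  omega

lemma blocks_disj [NeZero N] {a : ZMod N} {c1 L1 c2 L2 : ℕ}
    (hgap : c1 + L1 ≤ c2) (hbound : c2 + L2 ≤ N) :
    ∀ z, ¬(z ∈ arcF N (a + (c1 : ZMod N)) L1 ∧ z ∈ arcF N (a + (c2 : ZMod N)) L2) := by
  rintro z ⟨hz1, hz2⟩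
  obtain ⟨i, hi, rfl⟩ := mem_arcF.1 hz1
  obtain ⟨j, hj, hx⟩ := mem_arcF.1 hz2
  rw [addCast, addCast] at hx
  have := offset_eqZ (N := N) (by omega) (by omega) hx
  omega

lemma arcF_base0 [NeZero N] (a : ZMod N) (L : ℕ) :
    arcF N (a + ((0 : ℕ) : ZMod N)) L = arcF N a L := by
  norm_num

/-- J ∈ B properly inside I forces interior position -/
lemma prec_interior [NeZero N] (hN : 3 ≤ N) {a : ZMod N} {L M c : ℕ}
    (hL : L ≤ N - 1) (hcM : c + M ≤ L) (hM : 1 ≤ M)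
    (hprec : Prec (cadj N) (arcF N (a + (c : ZMod N)) M) (arcF N a L)) :
    1 ≤ c ∧ c + M < L := by
  have hsd := arc_sdiff (N := N) (a := a) hcM (by omega)
  constructor
  · by_contra hc
    have hc0 : c = 0 := by omega
    subst hc0
    apply hprec.2
    rw [hsd, arcF_zero, Finset.empty_union]
    exact connOn_arcF _ _
  · by_contra hcon
    have hcL : c + M = L := by omega
    apply hprec.2
    rw [hsd, hcL, Nat.sub_self, arcF_zero, Finset.union_empty]
    exact connOn_arcF _ _

/-- elementwise non-adjacency from Spade for path members -/
lemma spade_NA [NeZero N] (hN : 3 ≤ N) {I J : Finset (ZMod N)}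
    (hI : IsPathOn (cadj N) I) (hJ : IsPathOn (cadj N) J)
    (hsp : Spade (cadj N) I J) : ∀ x ∈ I, ∀ y ∈ J, ¬ cadj N x y := by
  intro x hx y hy hadj
  exact hsp.2 (connOn_union_of_adj (connOn_of_isPathOn hN hI) (connOn_of_isPathOn hN hJ) hx hy hadj)

lemma spade_disj {I J : Finset (ZMod N)} (hsp : Spade (cadj N) I J) :
    ∀ z, ¬(z ∈ I ∧ z ∈ J) := by
  rintro z ⟨h1, h2⟩
  have : z ∈ I ∩ J := Finset.mem_inter.2 ⟨h1, h2⟩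
  rw [hsp.1] at this
  exact absurd this (Finset.notMem_empty z)

/-- CalI1 for arcs -/
lemma calI1_arcF [NeZero N] (hN : 3 ≤ N) (a : ZMod N) {L : ℕ} (h1 : 1 ≤ L) (h2 : L ≤ N - 1)
    (hodd : Odd L) : CalI1 (cadj N) (arcF N a L) :=
  ⟨isPathOn_arcF hN a h1 h2, by rwa [card_arcF (by omega)]⟩

/-- Iev of an arc: superset direction -/
lemma mem_Iev_arc [NeZero N] (hN : 3 ≤ N) {a : ZMod N} {L o : ℕ}
    (hL : L ≤ N - 2) (hLodd : Odd L) (ho : o < L) (hoodd : Odd o) :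
    (a + (o : ZMod N)) ∈ Iev (cadj N) (arcF N a L) := by
  have hNpos : 0 < N := by omega
  have ho2 : o ≤ L - 2 := by
    rcases hLodd with ⟨l, hl⟩; rcases hoodd with ⟨p, hp⟩; omega
  have ho1 : 1 ≤ o := hoodd.pos
  have hdisjLR : ∀ z, ¬(z ∈ arcF N a o ∧ z ∈ arcF N (a + ((o + 1 : ℕ) : ZMod N)) (L - (o+1))) := by
    have := blocks_disj (N := N) (a := a) (c1 := 0) (L1 := o) (c2 := o + 1) (L2 := L - (o+1))
      (by omega) (by omega)
    rwa [arcF_base0] at this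
  have hNALR : ∀ x ∈ arcF N a o, ∀ y ∈ arcF N (a + ((o + 1 : ℕ) : ZMod N)) (L - (o+1)), ¬ cadj N x y := by
    have := blocks_NA (N := N) hN (a := a) (c1 := 0) (L1 := o) (c2 := o + 1) (L2 := L - (o+1))
      (by omega) (by omega)
    rwa [arcF_base0] at this
  refine ⟨mem_arcF.2 ⟨o, ho, rfl⟩, arcF N a o, arcF N (a + ((o + 1 : ℕ) : ZMod N)) (L - (o+1)), ?_, ?_, ?_, ?_⟩
  · exact calI1_arcF (L := o) hN a ho1 (by omega) hoodd
  · refine calI1_arcF (L := L - (o+1)) hN _ (by omega) (by omega) ?_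
    rw [Nat.odd_sub (by omega)]
    simp [Nat.odd_iff, Nat.even_iff] at hLodd hoodd ⊢
    omega
  · constructor
    · rw [Finset.eq_empty_iff_forall_notMem]
      intro z hz
      rw [Finset.mem_inter] at hz
      exact hdisjLR z hz
    · exact not_connOn_sep (x := a) (y := a + ((o+1 : ℕ) : ZMod N)) hNALR hdisjLR
        (self_mem_arcF ho1) (self_mem_arcF (by omega))
  · rw [Finset.erase_eq]
    have h1 : ({a + (o : ZMod N)} : Finset (ZMod N)) = arcF N (a + (o : ZMod N)) 1 := (arcF_one _).symm
    rw [h1, arc_sdiff (by omega) (by omega)]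

/-- Iev of an arc: subset direction -/
lemma Iev_arc_sub [NeZero N] (hN : 3 ≤ N) {a : ZMod N} {L : ℕ}
    (hL : L ≤ N - 2) (hLodd : Odd L) {s : ZMod N}
    (hs : s ∈ Iev (cadj N) (arcF N a L)) :
    ∃ o, o < L ∧ Odd o ∧ s = a + (o : ZMod N) := by
  obtain ⟨hsI, I', I'', hI', hI'', hsp, herase⟩ := hs
  obtain ⟨o, ho, rfl⟩ := mem_arcF.1 hsI
  refine ⟨o, ho, ?_, rfl⟩
  -- compute the two sides
  have herase' : (arcF N a L).erase (a + (o : ZMod N)) =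
      arcF N a o ∪ arcF N (a + ((o + 1 : ℕ) : ZMod N)) (L - (o+1)) := by
    rw [Finset.erase_eq]
    have h1 : ({a + (o : ZMod N)} : Finset (ZMod N)) = arcF N (a + (o : ZMod N)) 1 := (arcF_one _).symm
    rw [h1, arc_sdiff (by omega) (by omega)]
  set Lp := arcF N a o with hLp
  set Rp := arcF N (a + ((o + 1 : ℕ) : ZMod N)) (L - (o+1)) with hRp
  have hNA : ∀ x ∈ Lp, ∀ y ∈ Rp, ¬ cadj N x y := by
    rw [hLp, hRp]
    have := blocks_NA (N := N) hN (a := a) (c1 := 0) (L1 := o) (c2 := o + 1) (L2 := L - (o+1))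
      (by omega) (by omega)
    rwa [arcF_base0] at this
  have hdisj : ∀ z, ¬(z ∈ Lp ∧ z ∈ Rp) := by
    rw [hLp, hRp]
    have := blocks_disj (N := N) (a := a) (c1 := 0) (L1 := o) (c2 := o + 1) (L2 := L - (o+1))
      (by omega) (by omega)
    rwa [arcF_base0] at this
  have hI'ne : I'.Nonempty := Finset.card_pos.1 (hI'.2.pos)
  have hI''ne : I''.Nonempty := Finset.card_pos.1 (hI''.2.pos)
  -- o interior: else contradiction
  by_cases ho0 : o = 0
  · exfalso
    apply hsp.2
    rw [← herase, herase', hLp, hRp, ho0, arcF_zero]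
    simp only [Finset.empty_union]
    exact connOn_arcF _ _
  by_cases hoL : o = L - 1
  · exfalso
    apply hsp.2
    rw [← herase, herase', hLp, hRp, hoL]
    have : L - (L - 1 + 1) = 0 := by omega
    rw [this, arcF_zero]
    simp only [Finset.union_empty]
    exact connOn_arcF _ _
  -- now both parts nonempty
  have hLpne : Lp.Nonempty := arcF_nonempty (by omega)
  have hRpne : Rp.Nonempty := arcF_nonempty (by omega)
  have hsub' : I' ⊆ Lp ∪ Rp := by rw [← herase']; rw [herase]; exact Finset.subset_union_left
  have hsub'' : I'' ⊆ Lp ∪ Rp := by rw [← herase']; rw [herase]; exact Finset.subset_union_right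
  have hconn' := connOn_of_isPathOn hN hI'.1
  have hconn'' := connOn_of_isPathOn hN hI''.1
  have hNA' : ∀ x ∈ Rp, ∀ y ∈ Lp, ¬ cadj N x y := fun x hx y hy hadj => hNA y hy x hx (cadj_symm hadj)
  have side : ∀ (K : Finset (ZMod N)), ConnOn (cadj N) K → K ⊆ Lp ∪ Rp → K.Nonempty →
      K ⊆ Lp ∨ K ⊆ Rp := by
    intro K hc hsub ⟨u, hu⟩
    rcases Finset.mem_union.1 (hsub hu) with h | h
    · exact Or.inl (conn_sub hc hsub hNA hu h)
    · refine Or.inr (conn_sub hc (by rwa [Finset.union_comm] at hsub) hNA' hu h)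
  have hunion : I' ∪ I'' = Lp ∪ Rp := by rw [← herase, herase']
  have hdisj'' : ∀ z, ¬(z ∈ I' ∧ z ∈ I'') := spade_disj hsp
  -- exactly one of I', I'' equals Lp
  have eqside : ∀ (K K2 : Finset (ZMod N)), K ⊆ Lp → K2 ⊆ Rp → K ∪ K2 = Lp ∪ Rp → K = Lp := by
    intro K K2 hK hK2 huni
    apply Finset.Subset.antisymm hK
    intro z hz
    have : z ∈ K ∪ K2 := huni ▸ Finset.mem_union_left _ hz
    rcases Finset.mem_union.1 this with h | h
    · exact h
    · exact absurd (hK2 h) (fun hzr => hdisj z ⟨hz, hzr⟩)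
  have main : I' = Lp ∨ I'' = Lp := by
    rcases side I' hconn' hsub' hI'ne with h1 | h1 <;> rcases side I'' hconn'' hsub'' hI''ne with h2 | h2
    · exfalso
      obtain ⟨r, hr⟩ := hRpne
      have : r ∈ I' ∪ I'' := hunion ▸ Finset.mem_union_right _ hr
      rcases Finset.mem_union.1 this with h | h
      · exact hdisj r ⟨h1 h, hr⟩
      · exact hdisj r ⟨h2 h, hr⟩
    · exact Or.inl (eqside I' I'' h1 h2 hunion)
    · exact Or.inr (eqside I'' I' h2 h1 (by rw [Finset.union_comm]; exact hunion))
    · exfalso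
      obtain ⟨l, hl⟩ := hLpne
      have : l ∈ I' ∪ I'' := hunion ▸ Finset.mem_union_left _ hl
      rcases Finset.mem_union.1 this with h | h
      · exact hdisj l ⟨hl, h1 h⟩
      · exact hdisj l ⟨hl, h2 h⟩
  have hcardLp : Lp.card = o := card_arcF (by omega) a
  rcases main with h | h
  · have := hI'.2; rw [h, hcardLp] at this; exact this
  · have := hI''.2; rw [h, hcardLp] at this; exact this

end St13
namespace St13
open Finset

variable {N : ℕ}

/-- the quadratic form Q(v) = Σ v s · v (s+1) -/
def Qf (N : ℕ) [NeZero N] (v : Vc N) : ZMod 2 := ∑ s : ZMod N, v s * v (s + 1)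

/-- the associated bilinear form -/
def Bf (N : ℕ) [NeZero N] (u v : Vc N) : ZMod 2 :=
  ∑ s : ZMod N, (u s * v (s + 1) + v s * u (s + 1))

lemma Qf_add [NeZero N] (u v : Vc N) : Qf N (u + v) = Qf N u + Qf N v + Bf N u v := by
  unfold Qf Bf
  rw [← Finset.sum_add_distrib, ← Finset.sum_add_distrib]
  congr 1
  funext s
  simp only [Pi.add_apply]
  ring

lemma Bf_comm [NeZero N] (u v : Vc N) : Bf N u v = Bf N v u := by
  unfold Bf; congr 1; funext s; ring

lemma Bf_zero_right [NeZero N] (u : Vc N) : Bf N u 0 = 0 := by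
  unfold Bf; simp

lemma Bf_add_right [NeZero N] (u v w : Vc N) : Bf N u (v + w) = Bf N u v + Bf N u w := by
  unfold Bf
  rw [← Finset.sum_add_distrib]
  congr 1
  funext s
  simp only [Pi.add_apply]
  ring

lemma Bf_sum [NeZero N] (u : Vc N) (T : Finset (Finset (ZMod N))) (g : Finset (ZMod N) → Vc N) :
    Bf N u (∑ J ∈ T, g J) = ∑ J ∈ T, Bf N u (g J) := by
  induction T using Finset.induction_on with
  | empty => simpa using Bf_zero_right u
  | insert _ _ hJ ih =>
    rw [Finset.sum_insert hJ, Finset.sum_insert hJ, Bf_add_right, ih]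

lemma eSum_apply (X : Finset (ZMod N)) (s : ZMod N) :
    eSum (eVec N) X s = if s ∈ X then 1 else 0 := by
  unfold eSum eVec
  rw [Finset.sum_apply]
  exact Finset.sum_pi_single s (fun _ => (1 : ZMod 2)) X

lemma Qf_ind [NeZero N] (X : Finset (ZMod N)) :
    Qf N (eSum (eVec N) X) = ((X.filter (fun s => s + 1 ∈ X)).card : ZMod 2) := by
  unfold Qf
  have : ∀ s : ZMod N, eSum (eVec N) X s * eSum (eVec N) X (s + 1) =
      if s ∈ X.filter (fun s => s + 1 ∈ X) then 1 else 0 := by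
    intro s
    by_cases h1 : s ∈ X <;> by_cases h2 : s + 1 ∈ X <;>
      simp [eSum_apply, Finset.mem_filter, h1, h2]
  rw [Finset.sum_congr rfl (fun s _ => this s)]
  rw [Finset.sum_ite_mem, Finset.univ_inter, Finset.sum_const, nsmul_eq_mul, mul_one]

lemma Bf_ind [NeZero N] (X Y : Finset (ZMod N)) :
    Bf N (eSum (eVec N) X) (eSum (eVec N) Y) =
      ((X.filter (fun s => s + 1 ∈ Y)).card : ZMod 2) +
      ((Y.filter (fun s => s + 1 ∈ X)).card : ZMod 2) := by
  unfold Bf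
  have : ∀ s : ZMod N, eSum (eVec N) X s * eSum (eVec N) Y (s + 1) +
      eSum (eVec N) Y s * eSum (eVec N) X (s + 1) =
      (if s ∈ X.filter (fun s => s + 1 ∈ Y) then (1 : ZMod 2) else 0) +
      (if s ∈ Y.filter (fun s => s + 1 ∈ X) then (1 : ZMod 2) else 0) := by
    intro s
    by_cases h1 : s ∈ X <;> by_cases h2 : s + 1 ∈ Y <;> by_cases h3 : s ∈ Y <;>
      by_cases h4 : s + 1 ∈ X <;>
      simp [eSum_apply, Finset.mem_filter, h1, h2, h3, h4]
  rw [Finset.sum_congr rfl (fun s _ => this s), Finset.sum_add_distrib]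
  rw [Finset.sum_ite_mem, Finset.univ_inter, Finset.sum_const, nsmul_eq_mul, mul_one]
  rw [Finset.sum_ite_mem, Finset.univ_inter, Finset.sum_const, nsmul_eq_mul, mul_one]

/-- Q on an odd arc vanishes -/
lemma Qf_arc [NeZero N] (hN : 3 ≤ N) {a : ZMod N} {L : ℕ} (h1 : 1 ≤ L) (h2 : L ≤ N - 1) :
    Qf N (eSum (eVec N) (arcF N a L)) = ((L - 1 : ℕ) : ZMod 2) := by
  rw [Qf_ind]
  congr 1
  have : (arcF N a L).filter (fun s => s + 1 ∈ arcF N a L) = arcF N a (L - 1) := by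
    ext x
    simp only [Finset.mem_filter, mem_arcF]
    constructor
    · rintro ⟨⟨i, hi, rfl⟩, j, hj, hx⟩
      refine ⟨i, ?_, rfl⟩
      rw [show a + (i : ZMod N) + 1 = a + ((i + 1 : ℕ) : ZMod N) by push_cast; ring] at hx
      have := offset_eqZ (N := N) (by omega) (by omega) hx
      omega
    · rintro ⟨i, hi, rfl⟩
      exact ⟨⟨i, by omega, rfl⟩, i + 1, by omega, by push_cast; ring⟩
  rw [this, card_arcF (by omega)]

lemma natCast_zmod2_even {n : ℕ} (h : Even n) : (n : ZMod 2) = 0 := by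
  obtain ⟨k, hk⟩ := h
  subst hk
  push_cast
  ring_nf
  rw [show ((2:ZMod 2)) = 0 from rfl]
  ring

lemma natCast_zmod2_odd {n : ℕ} (h : Odd n) : (n : ZMod 2) = 1 := by
  obtain ⟨k, hk⟩ := h
  subst hk
  push_cast
  rw [show ((2:ZMod 2)) = 0 from rfl]
  ring

/-- Q of e_S -/
lemma Qf_univ [NeZero N] (hodd : Odd N) : Qf N (eSum (eVec N) Finset.univ) = 1 := by
  rw [Qf_ind]
  have : (Finset.univ : Finset (ZMod N)).filter (fun s => s + 1 ∈ Finset.univ) = Finset.univ := by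
    simp
  rw [this, Finset.card_univ, ZMod.card, natCast_zmod2_odd hodd]

/-- B(e_X, e_S) = 0 -/
lemma Bf_univ [NeZero N] (X : Finset (ZMod N)) :
    Bf N (eSum (eVec N) X) (eSum (eVec N) Finset.univ) = 0 := by
  rw [Bf_ind]
  have h1 : X.filter (fun s => s + 1 ∈ (Finset.univ : Finset (ZMod N))) = X := by simp
  have h2 : (Finset.univ : Finset (ZMod N)).filter (fun s => s + 1 ∈ X) =
      Finset.univ.filter (fun s => s ∈ X.image (fun x : ZMod N => x - 1)) := by
    apply Finset.filter_congr
    intro s _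
    simp only [Finset.mem_image, eq_iff_iff]
    constructor
    · intro h; exact ⟨s + 1, h, by ring⟩
    · rintro ⟨x, hx, rfl⟩; simpa [sub_add_cancel] using hx
  have h3 : (Finset.univ.filter (fun s => s ∈ X.image (fun x : ZMod N => x - 1))).card
      = X.card := by
    rw [Finset.filter_mem_eq_inter, Finset.univ_inter]
    exact Finset.card_image_of_injective _ (fun x y h => by
      have := congrArg (· + 1) h; simpa using this)
  rw [h1, h2, h3]
  exact CharTwo.add_self_eq_zero _

end St13
namespace St13
open Finset

variable {N : ℕ}

/-- arc representation of a member of a phi-family -/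
lemma member_arc [NeZero N] (hN : 3 ≤ N) (hNodd : Odd N) {I : Finset (ZMod N)}
    (hI : CalI1 (cadj N) I) :
    ∃ a L, I = arcF N a L ∧ Odd L ∧ 1 ≤ L ∧ L ≤ N - 2 ∧ I.card = L := by
  obtain ⟨a, ha, h1, h2⟩ := isPathOn_to_arc hN hI.1
  refine ⟨a, I.card, ha, hI.2, h1, ?_, rfl⟩
  rcases hI.2 with ⟨l, hl⟩
  rcases hNodd with ⟨n, hn⟩
  omega

/-- the two filters for a Prec pair both have card M -/
lemma Bf_prec [NeZero N] (hN : 3 ≤ N) {a : ZMod N} {L M c : ℕ}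
    (hL : L ≤ N - 1) (hM : 1 ≤ M) (hc : 1 ≤ c) (hcM : c + M < L) :
    Bf N (eSum (eVec N) (arcF N a L)) (eSum (eVec N) (arcF N (a + (c : ZMod N)) M)) = 0 := by
  rw [Bf_ind]
  have hf1 : (arcF N a L).filter (fun s => s + 1 ∈ arcF N (a + (c : ZMod N)) M) =
      arcF N (a + ((c - 1 : ℕ) : ZMod N)) M := by
    ext x
    simp only [Finset.mem_filter, mem_arcF]
    constructor
    · rintro ⟨⟨i, hi, rfl⟩, j, hj, hx⟩
      rw [addCast, show a + (i : ZMod N) + 1 = a + ((i + 1 : ℕ) : ZMod N) by push_cast; ring] at hx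
      have := offset_eqZ (N := N) (by omega) (by omega) hx
      refine ⟨i - (c - 1), by omega, ?_⟩
      rw [addCast]; congr 2; omega
    · rintro ⟨k, hk, rfl⟩
      refine ⟨⟨c - 1 + k, by omega, by rw [addCast]⟩, k, hk, ?_⟩
      rw [addCast, addCast, show a + ((c - 1 + k : ℕ) : ZMod N) + 1 =
        a + ((c - 1 + k + 1 : ℕ) : ZMod N) by push_cast; ring]
      congr 2
      omega
  have hf2 : (arcF N (a + (c : ZMod N)) M).filter (fun s => s + 1 ∈ arcF N a L) =
      arcF N (a + (c : ZMod N)) M := by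
    apply Finset.filter_true_of_mem
    intro x hx
    obtain ⟨j, hj, rfl⟩ := mem_arcF.1 hx
    rw [addCast, show a + ((c + j : ℕ) : ZMod N) + 1 = a + ((c + j + 1 : ℕ) : ZMod N)
      by push_cast; ring]
    exact mem_arcF.2 ⟨c + j + 1, by omega, rfl⟩
  rw [hf1, hf2, card_arcF (by omega), card_arcF (by omega)]
  exact CharTwo.add_self_eq_zero _

/-- Bf vanishes when the two sets are elementwise non-adjacent -/
lemma Bf_NA [NeZero N] {I J : Finset (ZMod N)}
    (hNA : ∀ x ∈ I, ∀ y ∈ J, ¬ cadj N x y) :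
    Bf N (eSum (eVec N) I) (eSum (eVec N) J) = 0 := by
  rw [Bf_ind]
  have h1 : I.filter (fun s => s + 1 ∈ J) = ∅ := by
    rw [Finset.eq_empty_iff_forall_notMem]
    intro x hx
    rw [Finset.mem_filter] at hx
    exact hNA x hx.1 (x+1) hx.2 (cadj_succ x)
  have h2 : J.filter (fun s => s + 1 ∈ I) = ∅ := by
    rw [Finset.eq_empty_iff_forall_notMem]
    intro x hx
    rw [Finset.mem_filter] at hx
    exact hNA (x+1) hx.2 x hx.1 (cadj_symm (cadj_succ x))
  rw [h1, h2]
  simp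

/-- Bf vanishes between distinct members of a phi-family -/
lemma Bf_members [NeZero N] (hN : 3 ≤ N) (hNodd : Odd N) {B : Finset (Finset (ZMod N))}
    (hB : B ∈ phiSet (cadj N)) {I J : Finset (ZMod N)}
    (hI : I ∈ B) (hJ : J ∈ B) (hne : I ≠ J) :
    Bf N (eSum (eVec N) I) (eSum (eVec N) J) = 0 := by
  have hprec : ∀ I' J' : Finset (ZMod N), CalI1 (cadj N) I' → CalI1 (cadj N) J' →
      Prec (cadj N) J' I' → Bf N (eSum (eVec N) I') (eSum (eVec N) J') = 0 := by
    intro I' J' hI' hJ' hp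
    obtain ⟨a, L, rfl, hLodd, hL1, hL2, hcard⟩ := member_arc hN hNodd hI'
    obtain ⟨b, M, rfl, hModd, hM1, hM2, hcardM⟩ := member_arc hN hNodd hJ'
    obtain ⟨c, hcML, rfl⟩ := sub_arc (by omega) hM1 hN hp.1.subset
    have hint := prec_interior hN (by omega) hcML hM1 hp
    exact Bf_prec hN (by omega) hM1 hint.1 hint.2
  rcases hB.2.1 I hI J hJ with h | h | h | h
  · exact absurd h hne
  · exact Bf_NA (spade_NA hN (hB.1 I hI).1 (hB.1 J hJ).1 h)
  · rw [Bf_comm]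
    exact hprec J I (hB.1 J hJ) (hB.1 I hI) h
  · exact hprec I J (hB.1 I hI) (hB.1 J hJ) h

/-- Qf vanishes on single members -/
lemma Qf_member [NeZero N] (hN : 3 ≤ N) (hNodd : Odd N) {I : Finset (ZMod N)} (hI : CalI1 (cadj N) I) :
    Qf N (eSum (eVec N) I) = 0 := by
  obtain ⟨a, L, rfl, hLodd, hL1, hL2, hcard⟩ := member_arc hN hNodd hI
  rw [Qf_arc hN hL1 (by omega)]
  apply natCast_zmod2_even
  rcases hLodd with ⟨l, hl⟩
  exact ⟨l, by omega⟩

/-- Qf vanishes on subset sums of a phi-family -/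
lemma Qf_subset_sum [NeZero N] (hN : 3 ≤ N) (hNodd : Odd N) {B : Finset (Finset (ZMod N))}
    (hB : B ∈ phiSet (cadj N)) :
    ∀ B' ⊆ B, Qf N (∑ I ∈ B', eSum (eVec N) I) = 0 := by
  intro B'
  induction B' using Finset.induction_on with
  | empty => intro _; simp [Qf]
  | @insert I B'' hnotmem ih =>
    intro hsub
    have hIB : I ∈ B := hsub (Finset.mem_insert_self _ _)
    have hsub'' : B'' ⊆ B := fun x hx => hsub (Finset.mem_insert_of_mem hx)
    rw [Finset.sum_insert hnotmem, Qf_add, Qf_member hN hNodd (hB.1 I hIB), ih hsub'', Bf_sum]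
    have : ∀ J ∈ B'', Bf N (eSum (eVec N) I) (eSum (eVec N) J) = 0 := by
      intro J hJ
      exact Bf_members hN hNodd hB hIB (hsub'' hJ) (fun h => hnotmem (h ▸ hJ))
    rw [Finset.sum_congr rfl this]
    simp

end St13
namespace St13
open Finset

variable {N : ℕ}

/-- no-two-consecutive subsets of a range are at most half -/
lemma noconsec_card {O : Finset ℕ} {M : ℕ} (hO : O ⊆ Finset.range M)
    (h : ∀ o ∈ O, o + 1 ∉ O) : 2 * O.card ≤ M + 1 := by
  have hdisj : Disjoint O (O.image (· + 1)) := by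
    rw [Finset.disjoint_left]
    intro x hx hx'
    obtain ⟨p, hp, rfl⟩ := Finset.mem_image.1 hx'
    exact h p hp hx
  have hsub : O ∪ O.image (· + 1) ⊆ Finset.range (M + 1) := by
    intro x hx
    rcases Finset.mem_union.1 hx with h1 | h1
    · exact Finset.mem_range.2 (by have := Finset.mem_range.1 (hO h1); omega)
    · obtain ⟨p, hp, rfl⟩ := Finset.mem_image.1 h1
      exact Finset.mem_range.2 (by have := Finset.mem_range.1 (hO hp); omega)
  have hcard := Finset.card_le_card hsub
  rw [Finset.card_union_of_disjoint hdisj, Finset.card_image_of_injective _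
    (fun a b hab => by omega), Finset.card_range] at hcard
  omega

lemma noconsec_eq {O : Finset ℕ} {M : ℕ} (hO : O ⊆ Finset.range M)
    (h : ∀ o ∈ O, o + 1 ∉ O) (hcard : M + 1 ≤ 2 * O.card) :
    ∀ o ≤ M, (o ∈ O ↔ Even o) := by
  have hdisj : Disjoint O (O.image (· + 1)) := by
    rw [Finset.disjoint_left]
    intro x hx hx'
    obtain ⟨p, hp, rfl⟩ := Finset.mem_image.1 hx'
    exact h p hp hx
  have hsub : O ∪ O.image (· + 1) ⊆ Finset.range (M + 1) := by
    intro x hx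
    rcases Finset.mem_union.1 hx with h1 | h1
    · exact Finset.mem_range.2 (by have := Finset.mem_range.1 (hO h1); omega)
    · obtain ⟨p, hp, rfl⟩ := Finset.mem_image.1 h1
      exact Finset.mem_range.2 (by have := Finset.mem_range.1 (hO hp); omega)
  have huni : O ∪ O.image (· + 1) = Finset.range (M + 1) := by
    apply Finset.eq_of_subset_of_card_le hsub
    rw [Finset.card_union_of_disjoint hdisj, Finset.card_image_of_injective _
      (fun a b hab => by omega), Finset.card_range]
    omega
  intro o
  induction o with
  | zero =>
    intro _
    have h0 : 0 ∈ O ∪ O.image (· + 1) := by rw [huni]; exact Finset.mem_range.2 (by omega)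
    rcases Finset.mem_union.1 h0 with h1 | h1
    · simp [h1]
    · obtain ⟨p, _, hp⟩ := Finset.mem_image.1 h1
      omega
  | succ o ih =>
    intro ho1
    have ho : o ≤ M := by omega
    have hmem : o + 1 ∈ O ∪ O.image (· + 1) := by
      rw [huni]; exact Finset.mem_range.2 (by omega)
    have hx : o + 1 ∈ O ∨ o ∈ O := by
      rcases Finset.mem_union.1 hmem with h1 | h1
      · exact Or.inl h1
      · obtain ⟨p, hp, hpe⟩ := Finset.mem_image.1 h1
        have : p = o := by omega
        exact Or.inr (this ▸ hp)
    constructor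
    · intro h1
      have : o ∉ O := fun h2 => h o h2 h1
      rw [ih ho] at this
      rw [Nat.even_add_one]
      exact this
    · intro h1
      rcases hx with h2 | h2
      · exact h2
      · exfalso
        rw [ih ho] at h2
        rw [Nat.even_add_one] at h1
        exact h1 h2

/-- an elementwise non-adjacent subset of an arc has at most (M+1)/2 elements (doubled form) -/
lemma indep_in_arc [NeZero N] {T : Finset (ZMod N)} {b : ZMod N} {M : ℕ} (hM : M ≤ N)
    (hT : T ⊆ arcF N b M) (hNA : ∀ x ∈ T, ∀ y ∈ T, ¬ cadj N x y) :
    2 * T.card ≤ M + 1 := by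
  set O := (Finset.range M).filter (fun o : ℕ => b + (o : ZMod N) ∈ T) with hO
  have hTeq : T = O.image (fun o : ℕ => b + (o : ZMod N)) := by
    ext x
    simp only [hO, Finset.mem_image, Finset.mem_filter, Finset.mem_range]
    constructor
    · intro hx
      obtain ⟨o, ho, rfl⟩ := mem_arcF.1 (hT hx)
      exact ⟨o, ⟨ho, hx⟩, rfl⟩
    · rintro ⟨o, ⟨ho, hmem⟩, rfl⟩
      exact hmem
  have hcard : T.card = O.card := by
    rw [hTeq]
    apply Finset.card_image_of_injOn
    intro o ho o' ho' hoo
    simp only [hO, Finset.coe_filter, Set.mem_setOf_eq, Finset.mem_range] at ho ho'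
    exact offset_eqZ (by omega) (by omega) hoo
  have hnc : ∀ o ∈ O, o + 1 ∉ O := by
    intro o ho ho1
    simp only [hO, Finset.mem_filter, Finset.mem_range] at ho ho1
    apply hNA _ ho.2 _ ho1.2
    rw [show b + ((o+1 : ℕ) : ZMod N) = b + (o : ZMod N) + 1 by push_cast; ring]
    exact cadj_succ _
  rw [hcard]
  exact noconsec_card (Finset.filter_subset _ _) hnc

lemma indep_in_arc_eq [NeZero N] {T : Finset (ZMod N)} {b : ZMod N} {M : ℕ} (hM : M ≤ N)
    (hT : T ⊆ arcF N b M) (hNA : ∀ x ∈ T, ∀ y ∈ T, ¬ cadj N x y)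
    (hc : M + 1 ≤ 2 * T.card) :
    ∀ o < M, (b + (o : ZMod N) ∈ T ↔ Even o) := by
  set O := (Finset.range M).filter (fun o : ℕ => b + (o : ZMod N) ∈ T) with hO
  have hTeq : T = O.image (fun o : ℕ => b + (o : ZMod N)) := by
    ext x
    simp only [hO, Finset.mem_image, Finset.mem_filter, Finset.mem_range]
    constructor
    · intro hx
      obtain ⟨o, ho, rfl⟩ := mem_arcF.1 (hT hx)
      exact ⟨o, ⟨ho, hx⟩, rfl⟩
    · rintro ⟨o, ⟨ho, hmem⟩, rfl⟩
      exact hmem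
  have hcard : T.card = O.card := by
    rw [hTeq]
    apply Finset.card_image_of_injOn
    intro o ho o' ho' hoo
    simp only [hO, Finset.coe_filter, Set.mem_setOf_eq, Finset.mem_range] at ho ho'
    exact offset_eqZ (by omega) (by omega) hoo
  have hnc : ∀ o ∈ O, o + 1 ∉ O := by
    intro o ho ho1
    simp only [hO, Finset.mem_filter, Finset.mem_range] at ho ho1
    apply hNA _ ho.2 _ ho1.2
    rw [show b + ((o+1 : ℕ) : ZMod N) = b + (o : ZMod N) + 1 by push_cast; ring]
    exact cadj_succ _
  have := noconsec_eq (Finset.filter_subset _ _) hnc (by rw [← hO]; omega)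
  intro o ho
  have h2 := this o (by omega)
  rw [← h2]
  simp only [hO, Finset.mem_filter, Finset.mem_range]
  constructor
  · intro h3; exact ⟨ho, h3⟩
  · rintro ⟨_, h3⟩; exact h3

/-- packing bound -/
lemma pack_bound [NeZero N] {C : Finset (Finset (ZMod N))} {T : Finset (ZMod N)}
    (hsub : ∀ J ∈ C, J ⊆ T)
    (hu : ∀ J ∈ C, ∃ u, u ∈ J ∧ u + 1 ∉ J ∧ u + 1 ∈ T)
    (hdisj : ∀ J ∈ C, ∀ J' ∈ C, J ≠ J' → J ∩ J' = ∅)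
    (hNA : ∀ J ∈ C, ∀ J' ∈ C, J ≠ J' → ∀ x ∈ J, ∀ y ∈ J', ¬ cadj N x y) :
    ∑ J ∈ C, (J.card + 1) ≤ T.card := by
  classical
  set g : Finset (ZMod N) → Finset (ZMod N) := fun J =>
    if h : ∃ u, u ∈ J ∧ u + 1 ∉ J ∧ u + 1 ∈ T then insert (h.choose + 1) J else J with hg
  have hgJ : ∀ J ∈ C, ∃ u, u ∈ J ∧ u + 1 ∉ J ∧ u + 1 ∈ T ∧ g J = insert (u + 1) J := by
    intro J hJ
    have h := hu J hJ
    refine ⟨h.choose, h.choose_spec.1, h.choose_spec.2.1, h.choose_spec.2.2, ?_⟩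
    simp only [hg, dif_pos h]
  have hdisj2 : ∀ z : ZMod N, ∀ J ∈ C, ∀ J' ∈ C, J ≠ J' → z ∈ J → z ∈ J' → False := by
    intro z J hJ J' hJ' hne h1 h2
    have := hdisj J hJ J' hJ' hne
    have : z ∈ J ∩ J' := Finset.mem_inter.2 ⟨h1, h2⟩
    rw [hdisj J hJ J' hJ' hne] at this
    exact absurd this (Finset.notMem_empty z)
  have key : ∀ J ∈ C, ∀ J' ∈ C, J ≠ J' → Disjoint (g J) (g J') := by
    intro J hJ J' hJ' hne
    obtain ⟨u, hu1, hu2, hu3, hgeq⟩ := hgJ J hJ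
    obtain ⟨u', hu1', hu2', hu3', hgeq'⟩ := hgJ J' hJ'
    rw [hgeq, hgeq', Finset.disjoint_left]
    intro x hx hx'
    rcases Finset.mem_insert.1 hx with rfl | hxJ
    · rcases Finset.mem_insert.1 hx' with heq | hxJ'
      · have huu : u = u' := by exact add_right_cancel heq
        exact hdisj2 u J hJ J' hJ' hne hu1 (huu ▸ hu1')
      · exact hNA J hJ J' hJ' hne u hu1 (u + 1) hxJ' (cadj_succ u)
    · rcases Finset.mem_insert.1 hx' with heq | hxJ'
      · exact hNA J' hJ' J hJ (Ne.symm hne) u' hu1' x hxJ (by rw [heq]; exact cadj_succ u')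
      · exact hdisj2 x J hJ J' hJ' hne hxJ hxJ'
  have hcards : ∀ J ∈ C, (g J).card = J.card + 1 := by
    intro J hJ
    obtain ⟨u, hu1, hu2, hu3, hgeq⟩ := hgJ J hJ
    rw [hgeq, Finset.card_insert_of_notMem hu2]
  have hsum : ∑ J ∈ C, (J.card + 1) = (C.biUnion g).card := by
    rw [Finset.card_biUnion key]
    exact Finset.sum_congr rfl (fun J hJ => (hcards J hJ).symm)
  rw [hsum]
  apply Finset.card_le_card
  intro x hx
  obtain ⟨J, hJ, hxg⟩ := Finset.mem_biUnion.1 hx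
  obtain ⟨u, hu1, hu2, hu3, hgeq⟩ := hgJ J hJ
  rw [hgeq] at hxg
  rcases Finset.mem_insert.1 hxg with rfl | hxJ
  · exact hu3
  · exact hsub J hJ hxJ

end St13
namespace St13
open Finset

variable {N : ℕ}

lemma exists_max {α : Type} [DecidableEq α] {C : Finset (Finset α)} {K : Finset α}
    (hK : K ∈ C) : ∃ J ∈ maxElts C, K ⊆ J := by
  obtain ⟨J, hJ, hmax⟩ := Finset.exists_max_image (C.filter (fun J => K ⊆ J)) Finset.card
    ⟨K, Finset.mem_filter.2 ⟨hK, Finset.Subset.refl K⟩⟩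
  rw [Finset.mem_filter] at hJ
  refine ⟨J, ?_, hJ.2⟩
  rw [maxElts, Finset.mem_filter]
  refine ⟨hJ.1, fun I' hI' hss => ?_⟩
  have hmem : I' ∈ C.filter (fun J => K ⊆ J) :=
    Finset.mem_filter.2 ⟨hI', hJ.2.trans hss.subset⟩
  have h1 := hmax I' hmem
  have h2 := Finset.card_lt_card hss
  omega

lemma maxElts_subset {α : Type} [DecidableEq α] {C : Finset (Finset α)} :
    maxElts C ⊆ C := Finset.filter_subset _ _

lemma maxElts_not_lt {α : Type} [DecidableEq α] {C : Finset (Finset α)} {J J' : Finset α}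
    (hJ : J ∈ maxElts C) (hJ' : J' ∈ C) : ¬ J ⊂ J' := by
  rw [maxElts, Finset.mem_filter] at hJ
  exact hJ.2 J' hJ'

/-- member of phi family is nonempty -/
lemma member_nonempty {B : Finset (Finset (ZMod N))} (hB : B ∈ phiSet (cadj N))
    {I : Finset (ZMod N)} (hI : I ∈ B) : I.Nonempty :=
  Finset.card_pos.1 (hB.1 I hI).2.pos

/-- incomparable distinct members are disjoint and non-adjacent -/
lemma members_sep [NeZero N] (hN : 3 ≤ N) {B : Finset (Finset (ZMod N))}
    (hB : B ∈ phiSet (cadj N)) {I J : Finset (ZMod N)} (hI : I ∈ B) (hJ : J ∈ B)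
    (hne : I ≠ J) (h1 : ¬ I ⊂ J) (h2 : ¬ J ⊂ I) :
    I ∩ J = ∅ ∧ (∀ x ∈ I, ∀ y ∈ J, ¬ cadj N x y) := by
  rcases hB.2.1 I hI J hJ with h | h | h | h
  · exact absurd h hne
  · exact ⟨h.1, spade_NA hN (hB.1 I hI).1 (hB.1 J hJ).1 h⟩
  · exact absurd h.1 h1
  · exact absurd h.1 h2

/-- a member properly contained in another is Prec -/
lemma members_prec {B : Finset (Finset (ZMod N))} (hB : B ∈ phiSet (cadj N))
    {I J : Finset (ZMod N)} (hI : I ∈ B) (hJ : J ∈ B) (hss : J ⊂ I) :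
    Prec (cadj N) J I := by
  rcases hB.2.1 J hJ I hI with h | h | h | h
  · exact absurd h hss.ne
  · exfalso
    obtain ⟨x, hx⟩ := member_nonempty hB hJ
    have : x ∈ J ∩ I := Finset.mem_inter.2 ⟨hx, hss.subset hx⟩
    rw [h.1] at this
    exact absurd this (Finset.notMem_empty x)
  · exact h
  · exact absurd h.1 hss.asymm

/-- subtree filter -/
def Bsub (B : Finset (Finset (ZMod N))) (I : Finset (ZMod N)) : Finset (Finset (ZMod N)) :=
  B.filter (fun J => J ⊆ I)

/-- children -/
def chB (B : Finset (Finset (ZMod N))) (I : Finset (ZMod N)) : Finset (Finset (ZMod N)) :=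
  maxElts (B.filter (fun J => J ⊂ I))

lemma chB_mem {B : Finset (Finset (ZMod N))} {I J : Finset (ZMod N)} (h : J ∈ chB B I) :
    J ∈ B ∧ J ⊂ I := by
  have := maxElts_subset h
  rw [Finset.mem_filter] at this
  exact this

lemma chB_sep [NeZero N] (hN : 3 ≤ N) {B : Finset (Finset (ZMod N))}
    (hB : B ∈ phiSet (cadj N)) {I J J' : Finset (ZMod N)}
    (hJ : J ∈ chB B I) (hJ' : J' ∈ chB B I) (hne : J ≠ J') :
    J ∩ J' = ∅ ∧ (∀ x ∈ J, ∀ y ∈ J', ¬ cadj N x y) := by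
  have h1 := chB_mem hJ
  have h2 := chB_mem hJ'
  apply members_sep hN hB h1.1 h2.1 hne
  · exact maxElts_not_lt hJ (Finset.mem_filter.2 ⟨h2.1, h2.2⟩)
  · exact maxElts_not_lt hJ' (Finset.mem_filter.2 ⟨h1.1, h1.2⟩)

lemma Bsub_disjoint_of_inter_empty {B : Finset (Finset (ZMod N))} (hB : B ∈ phiSet (cadj N))
    {J J' : Finset (ZMod N)} (h : J ∩ J' = ∅) :
    Disjoint (Bsub B J) (Bsub B J') := by
  rw [Finset.disjoint_left]
  intro K hK hK'
  rw [Bsub, Finset.mem_filter] at hK hK'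
  obtain ⟨x, hx⟩ := member_nonempty hB hK.1
  have : x ∈ J ∩ J' := Finset.mem_inter.2 ⟨hK.2 hx, hK'.2 hx⟩
  rw [h] at this
  exact absurd this (Finset.notMem_empty x)

/-- tree recursion for subtree counts -/
lemma f_eq [NeZero N] (hN : 3 ≤ N) {B : Finset (Finset (ZMod N))}
    (hB : B ∈ phiSet (cadj N)) {I : Finset (ZMod N)} (hI : I ∈ B) :
    (Bsub B I).card = 1 + ∑ J ∈ chB B I, (Bsub B J).card := by
  have h1 : Bsub B I = insert I (B.filter (fun J => J ⊂ I)) := by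
    ext K
    rw [Bsub, Finset.mem_filter, Finset.mem_insert, Finset.mem_filter]
    constructor
    · rintro ⟨hK, hKI⟩
      rcases hKI.ssubset_or_eq with h | h
      · exact Or.inr ⟨hK, h⟩
      · exact Or.inl h
    · rintro (rfl | ⟨hK, hKI⟩)
      · exact ⟨hI, Finset.Subset.refl _⟩
      · exact ⟨hK, hKI.subset⟩
  have h2 : B.filter (fun J => J ⊂ I) = (chB B I).biUnion (fun J => Bsub B J) := by
    apply Finset.Subset.antisymm
    · intro K hK
      obtain ⟨J, hJ, hKJ⟩ := exists_max hK
      rw [Finset.mem_filter] at hK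
      exact Finset.mem_biUnion.2 ⟨J, hJ, Finset.mem_filter.2 ⟨hK.1, hKJ⟩⟩
    · intro K hK
      obtain ⟨J, hJ, hKJ⟩ := Finset.mem_biUnion.1 hK
      rw [Bsub, Finset.mem_filter] at hKJ
      have := chB_mem hJ
      exact Finset.mem_filter.2 ⟨hKJ.1, lt_of_le_of_lt hKJ.2 this.2⟩
  rw [h1, Finset.card_insert_of_notMem (by
    rw [Finset.mem_filter]
    rintro ⟨_, hc⟩
    exact ssubset_irrefl I hc), h2, Finset.card_biUnion (fun J hJ J' hJ' hne =>
      Bsub_disjoint_of_inter_empty hB (chB_sep hN hB hJ hJ' hne).1)]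
  omega

/-- right extension data for arcs of a phi family member -/
lemma member_ext [NeZero N] (hN : 3 ≤ N) (hNodd : Odd N) {B : Finset (Finset (ZMod N))}
    (hB : B ∈ phiSet (cadj N)) {J : Finset (ZMod N)} (hJ : J ∈ B) :
    ∃ u, u ∈ J ∧ u + 1 ∉ J := by
  obtain ⟨b, M, rfl, hModd, hM1, hM2, hcard⟩ := member_arc hN hNodd (hB.1 J hJ)
  refine ⟨b + ((M - 1 : ℕ) : ZMod N), mem_arcF.2 ⟨M - 1, by omega, rfl⟩, ?_⟩
  intro hmem
  rw [show b + ((M-1 : ℕ) : ZMod N) + 1 = b + ((M : ℕ) : ZMod N) by push_cast [Nat.cast_sub (by omega : 1 ≤ M)]; ring] at hmem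
  obtain ⟨j, hj, hx⟩ := mem_arcF.1 hmem
  have := offset_eqZ (N := N) (by omega) (by omega) hx.symm
  omega

/-- UB: doubled subtree count at most card + 1 -/
lemma UB1 [NeZero N] (hN : 3 ≤ N) (hNodd : Odd N) {B : Finset (Finset (ZMod N))}
    (hB : B ∈ phiSet (cadj N)) :
    ∀ n (I : Finset (ZMod N)), I ∈ B → I.card ≤ n → 2 * (Bsub B I).card ≤ I.card + 1 := by
  intro n
  induction n with
  | zero =>
    intro I hI hc
    have := member_nonempty hB hI
    rw [← Finset.card_pos] at this
    omega
  | succ n ih =>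
    intro I hI hc
    rw [f_eq hN hB hI]
    -- packing of children inside the interior
    obtain ⟨a, L, hIa, hLodd, hL1, hL2, hcard⟩ := member_arc hN hNodd (hB.1 I hI)
    have hpack : ∑ J ∈ chB B I, (J.card + 1) ≤ I.card - 1 := by
      have hbd : ∀ J ∈ chB B I, J ⊆ I.erase a ∧ ∃ u, u ∈ J ∧ u + 1 ∉ J ∧ u + 1 ∈ I.erase a := by
        intro J hJc
        have hJm := chB_mem hJc
        have hprec := members_prec hB hI hJm.1 hJm.2
        obtain ⟨b, M, hJb, hModd, hM1, hM2, hcardJ⟩ := member_arc hN hNodd (hB.1 J hJm.1)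
        have hsubJI : arcF N b M ⊆ arcF N a L := by rw [← hJb, ← hIa]; exact hJm.2.subset
        obtain ⟨c, hcML, hbc⟩ := sub_arc (by omega) hM1 hN hsubJI
        rw [hbc] at hJb
        have hint := prec_interior hN (by omega) hcML hM1 (by rw [← hJb, ← hIa]; exact hprec)
        have haJ : ∀ j, j < M → a + ((c + j : ℕ) : ZMod N) ≠ a := by
          intro j hj hcon
          have : a + ((c + j : ℕ) : ZMod N) = a + ((0 : ℕ) : ZMod N) := by
            rw [hcon]; simp
          have := offset_eqZ (N := N) (by omega) (by omega) this
          omega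
        constructor
        · intro z hz
          rw [hJb] at hz
          obtain ⟨j, hj, rfl⟩ := mem_arcF.1 hz
          rw [addCast]
          rw [Finset.mem_erase]
          refine ⟨haJ j hj, ?_⟩
          rw [hIa]
          exact mem_arcF.2 ⟨c + j, by omega, rfl⟩
        · refine ⟨a + ((c + M - 1 : ℕ) : ZMod N), ?_, ?_, ?_⟩
          · rw [hJb]
            exact mem_arcF.2 ⟨M - 1, by omega, by rw [addCast]; congr 2; omega⟩
          · intro hmem
            rw [hJb] at hmem
            rw [show a + ((c + M - 1 : ℕ) : ZMod N) + 1 = a + ((c + M : ℕ) : ZMod N) by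
              push_cast [Nat.cast_sub (by omega : 1 ≤ c + M)]; ring] at hmem
            obtain ⟨j, hj, hx⟩ := mem_arcF.1 hmem
            rw [addCast] at hx
            have := offset_eqZ (N := N) (by omega) (by omega) hx
            omega
          · rw [show a + ((c + M - 1 : ℕ) : ZMod N) + 1 = a + ((c + M : ℕ) : ZMod N) by
              push_cast [Nat.cast_sub (by omega : 1 ≤ c + M)]; ring]
            rw [Finset.mem_erase]
            refine ⟨?_, ?_⟩
            · intro hcon
              have : a + ((c + M : ℕ) : ZMod N) = a + ((0 : ℕ) : ZMod N) := by rw [hcon]; simp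
              have := offset_eqZ (N := N) (by omega) (by omega) this
              omega
            · rw [hIa]; exact mem_arcF.2 ⟨c + M, by omega, rfl⟩
      have := pack_bound (T := I.erase a) (C := chB B I)
        (fun J hJ => (hbd J hJ).1) (fun J hJ => (hbd J hJ).2)
        (fun J hJ J' hJ' hne => (chB_sep hN hB hJ hJ' hne).1)
        (fun J hJ J' hJ' hne => (chB_sep hN hB hJ hJ' hne).2)
      rwa [Finset.card_erase_of_mem (by rw [hIa]; exact self_mem_arcF hL1)] at this
    have hch : ∀ J ∈ chB B I, 2 * (Bsub B J).card ≤ J.card + 1 := by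
      intro J hJ
      have hJm := chB_mem hJ
      exact ih J hJm.1 (by have := Finset.card_lt_card hJm.2; omega)
    have hsum : ∑ J ∈ chB B I, 2 * (Bsub B J).card ≤ ∑ J ∈ chB B I, (J.card + 1) :=
      Finset.sum_le_sum hch
    have hIc : 1 ≤ I.card := Finset.card_pos.2 (member_nonempty hB hI)
    have hmul : 2 * (1 + ∑ J ∈ chB B I, (Bsub B J).card)
        = 2 + ∑ J ∈ chB B I, 2 * (Bsub B J).card := by
      rw [mul_add, mul_one, Finset.mul_sum]
    omega

end St13
namespace St13
open Finset

variable {N : ℕ}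

def oddIF (N : ℕ) (a : ZMod N) (L : ℕ) : Finset (ZMod N) :=
  ((Finset.range L).filter (fun o => Odd o)).image (fun o : ℕ => a + (o : ZMod N))

def evIF (N : ℕ) (a : ZMod N) (L : ℕ) : Finset (ZMod N) :=
  ((Finset.range L).filter (fun o => Even o)).image (fun o : ℕ => a + (o : ZMod N))

lemma count_odd_range (L : ℕ) : ((Finset.range L).filter (fun o => Odd o)).card = L / 2 := by
  induction L with
  | zero => simp
  | succ L ih =>
    rw [Finset.range_add_one, Finset.filter_insert]
    by_cases h : Odd L
    · rw [if_pos h, Finset.card_insert_of_notMem (by simp)]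
      rw [Nat.odd_iff] at h
      omega
    · rw [if_neg h]
      rw [Nat.odd_iff] at h
      omega

lemma count_even_range (L : ℕ) : ((Finset.range L).filter (fun o => Even o)).card = (L + 1) / 2 := by
  induction L with
  | zero => simp
  | succ L ih =>
    rw [Finset.range_add_one, Finset.filter_insert]
    by_cases h : Even L
    · rw [if_pos h, Finset.card_insert_of_notMem (by simp)]
      rw [Nat.even_iff] at h
      omega
    · rw [if_neg h]
      rw [Nat.even_iff] at h
      omega

lemma card_oddIF [NeZero N] {a : ZMod N} {L : ℕ} (hL : L ≤ N) :
    (oddIF N a L).card = L / 2 := by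
  rw [oddIF, Finset.card_image_of_injOn, count_odd_range]
  intro o ho o' ho' hoo
  simp only [Finset.coe_filter, Set.mem_setOf_eq, Finset.mem_range] at ho ho'
  exact offset_eqZ (by omega) (by omega) hoo

lemma card_evIF [NeZero N] {a : ZMod N} {L : ℕ} (hL : L ≤ N) :
    (evIF N a L).card = (L + 1) / 2 := by
  rw [evIF, Finset.card_image_of_injOn, count_even_range]
  intro o ho o' ho' hoo
  simp only [Finset.coe_filter, Set.mem_setOf_eq, Finset.mem_range] at ho ho'
  exact offset_eqZ (by omega) (by omega) hoo

lemma mem_oddIF {a x : ZMod N} {L : ℕ} :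
    x ∈ oddIF N a L ↔ ∃ o, o < L ∧ Odd o ∧ x = a + (o : ZMod N) := by
  simp only [oddIF, Finset.mem_image, Finset.mem_filter, Finset.mem_range]
  constructor
  · rintro ⟨o, ⟨h1, h2⟩, rfl⟩; exact ⟨o, h1, h2, rfl⟩
  · rintro ⟨o, h1, h2, rfl⟩; exact ⟨o, ⟨h1, h2⟩, rfl⟩

lemma mem_evIF {a x : ZMod N} {L : ℕ} :
    x ∈ evIF N a L ↔ ∃ o, o < L ∧ Even o ∧ x = a + (o : ZMod N) := by
  simp only [evIF, Finset.mem_image, Finset.mem_filter, Finset.mem_range]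
  constructor
  · rintro ⟨o, ⟨h1, h2⟩, rfl⟩; exact ⟨o, h1, h2, rfl⟩
  · rintro ⟨o, h1, h2, rfl⟩; exact ⟨o, ⟨h1, h2⟩, rfl⟩

lemma oddIF_NA [NeZero N] (hN : 3 ≤ N) {a : ZMod N} {L : ℕ} (hL : L ≤ N - 1) :
    ∀ x ∈ oddIF N a L, ∀ y ∈ oddIF N a L, ¬ cadj N x y := by
  intro x hx y hy hadj
  obtain ⟨o, ho, hodd, rfl⟩ := mem_oddIF.1 hx
  obtain ⟨o', ho', hodd', rfl⟩ := mem_oddIF.1 hy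
  rw [cadj_iff (by omega) (by omega)] at hadj
  rw [Nat.odd_iff] at hodd hodd'
  omega

lemma evIF_NA [NeZero N] (hN : 3 ≤ N) {a : ZMod N} {L : ℕ} (hL : L ≤ N - 2) :
    ∀ x ∈ evIF N a L, ∀ y ∈ evIF N a L, ¬ cadj N x y := by
  intro x hx y hy hadj
  obtain ⟨o, ho, hodd, rfl⟩ := mem_evIF.1 hx
  obtain ⟨o', ho', hodd', rfl⟩ := mem_evIF.1 hy
  rw [cadj_iff (by omega) (by omega)] at hadj
  rw [Nat.even_iff] at hodd hodd'
  omega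

lemma Iev_eq_oddIF [NeZero N] (hN : 3 ≤ N) {a : ZMod N} {L : ℕ}
    (hL : L ≤ N - 2) (hLodd : Odd L) :
    Iev (cadj N) (arcF N a L) = ↑(oddIF N a L) := by
  ext x
  constructor
  · intro hx
    obtain ⟨o, ho, hodd, rfl⟩ := Iev_arc_sub hN hL hLodd hx
    exact mem_oddIF.2 ⟨o, ho, hodd, rfl⟩
  · intro hx
    obtain ⟨o, ho, hodd, rfl⟩ := mem_oddIF.1 hx
    exact mem_Iev_arc hN hL hLodd ho hodd

/-- LB: doubled subtree count at least card + 1 -/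
lemma LB1 [NeZero N] (hN : 3 ≤ N) (hNodd : Odd N) {B : Finset (Finset (ZMod N))}
    (hB : B ∈ phiSet (cadj N)) :
    ∀ n (I : Finset (ZMod N)), I ∈ B → I.card ≤ n → I.card + 1 ≤ 2 * (Bsub B I).card := by
  intro n
  induction n with
  | zero =>
    intro I hI hc
    have := Finset.card_pos.2 (member_nonempty hB hI)
    omega
  | succ n ih =>
    intro I hI hc
    obtain ⟨k, fS, hmem, hdisjF, hcov⟩ := hB.2.2 I hI
    obtain ⟨a, L, hIa, hLodd, hL1, hL2, hcard⟩ := member_arc hN hNodd (hB.1 I hI)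
    -- count of subtree at least 1 + sum over children subtrees
    have hstep : 1 + ∑ j : Fin k, (Bsub B (fS j)).card ≤ (Bsub B I).card := by
      have hbu : (Finset.univ : Finset (Fin k)).biUnion (fun j => Bsub B (fS j)) ⊆
          Bsub B I := by
        intro K hK
        obtain ⟨j, _, hKj⟩ := Finset.mem_biUnion.1 hK
        rw [Bsub, Finset.mem_filter] at hKj ⊢
        exact ⟨hKj.1, hKj.2.trans (hmem j).2.1.subset⟩
      have hIni : I ∉ (Finset.univ : Finset (Fin k)).biUnion (fun j => Bsub B (fS j)) := by
        intro hcon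
        obtain ⟨j, _, hKj⟩ := Finset.mem_biUnion.1 hcon
        rw [Bsub, Finset.mem_filter] at hKj
        exact (ssubset_irrefl I) (lt_of_le_of_lt hKj.2 (hmem j).2.1)
      have hins : insert I ((Finset.univ : Finset (Fin k)).biUnion (fun j => Bsub B (fS j)))
          ⊆ Bsub B I := by
        intro K hK
        rcases Finset.mem_insert.1 hK with rfl | hK'
        · exact Finset.mem_filter.2 ⟨hI, Finset.Subset.refl _⟩
        · exact hbu hK'
      have h1 := Finset.card_le_card hins
      rw [Finset.card_insert_of_notMem hIni, Finset.card_biUnion (fun j _ j' _ hne =>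
        Bsub_disjoint_of_inter_empty hB
          (Finset.disjoint_iff_inter_eq_empty.1 (hdisjF j j' hne)))] at h1
      omega
    -- children cover the odd positions
    have hcov2 : oddIF N a L ⊆ (Finset.univ : Finset (Fin k)).biUnion
        (fun j => fS j ∩ oddIF N a L) := by
      intro x hx
      have hxIev : x ∈ Iev (cadj N) I := by
        rw [hIa, Iev_eq_oddIF hN hL2 hLodd]
        exact hx
      have := hcov hxIev
      rw [Set.mem_iUnion] at this
      obtain ⟨j, hj⟩ := this
      exact Finset.mem_biUnion.2 ⟨j, Finset.mem_univ j, Finset.mem_inter.2 ⟨hj, hx⟩⟩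
    have hcount : L / 2 ≤ ∑ j : Fin k, (fS j ∩ oddIF N a L).card := by
      calc L / 2 = (oddIF N a L).card := (card_oddIF (by omega)).symm
        _ ≤ ((Finset.univ : Finset (Fin k)).biUnion (fun j => fS j ∩ oddIF N a L)).card :=
            Finset.card_le_card hcov2
        _ ≤ ∑ j : Fin k, (fS j ∩ oddIF N a L).card := Finset.card_biUnion_le
    -- each child meets few odd positions
    have hindep : ∀ j : Fin k, 2 * (fS j ∩ oddIF N a L).card ≤ (fS j).card + 1 := by
      intro j
      obtain ⟨b, M, hJb, hModd, hM1, hM2, hcardJ⟩ := member_arc hN hNodd (hB.1 _ (hmem j).1)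
      rw [hcardJ]
      apply indep_in_arc (b := b) (M := M) (by omega)
      · rw [← hJb]; exact (Finset.inter_subset_left)
      · intro x hx y hy
        exact oddIF_NA hN (by omega : L ≤ N - 1) x (Finset.mem_inter.1 hx).2 y
          (Finset.mem_inter.1 hy).2
    have hih : ∀ j : Fin k, (fS j).card + 1 ≤ 2 * (Bsub B (fS j)).card := by
      intro j
      apply ih _ (hmem j).1
      have h1 := Finset.card_lt_card (hmem j).2.1
      omega
    have hsum1 : ∑ j : Fin k, ((fS j).card + 1) ≤ ∑ j : Fin k, 2 * (Bsub B (fS j)).card :=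
      Finset.sum_le_sum (fun j _ => hih j)
    have hsum2 : ∑ j : Fin k, 2 * (fS j ∩ oddIF N a L).card ≤ ∑ j : Fin k, ((fS j).card + 1) :=
      Finset.sum_le_sum (fun j _ => hindep j)
    have hm1 : ∑ j : Fin k, 2 * (fS j ∩ oddIF N a L).card
        = 2 * ∑ j : Fin k, (fS j ∩ oddIF N a L).card := by rw [Finset.mul_sum]
    have hm2 : ∑ j : Fin k, 2 * (Bsub B (fS j)).card
        = 2 * ∑ j : Fin k, (Bsub B (fS j)).card := by rw [Finset.mul_sum]
    rw [Nat.odd_iff] at hLodd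
    omega

end St13
namespace St13
open Finset

variable {N : ℕ}

lemma roots_sep [NeZero N] (hN : 3 ≤ N) {B : Finset (Finset (ZMod N))}
    (hB : B ∈ phiSet (cadj N)) {R R' : Finset (ZMod N)}
    (hR : R ∈ maxElts B) (hR' : R' ∈ maxElts B) (hne : R ≠ R') :
    R ∩ R' = ∅ ∧ (∀ x ∈ R, ∀ y ∈ R', ¬ cadj N x y) := by
  apply members_sep hN hB (maxElts_subset hR) (maxElts_subset hR') hne
  · exact maxElts_not_lt hR (maxElts_subset hR')
  · exact maxElts_not_lt hR' (maxElts_subset hR)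

lemma roots_partition [NeZero N] {B : Finset (Finset (ZMod N))} :
    B = (maxElts B).biUnion (fun R => Bsub B R) := by
  apply Finset.Subset.antisymm
  · intro K hK
    obtain ⟨R, hR, hKR⟩ := exists_max hK
    exact Finset.mem_biUnion.2 ⟨R, hR, Finset.mem_filter.2 ⟨hK, hKR⟩⟩
  · intro K hK
    obtain ⟨R, _, hKR⟩ := Finset.mem_biUnion.1 hK
    exact (Finset.mem_filter.1 hKR).1

/-- main counting lemma -/
lemma roots_count [NeZero N] (hN : 3 ≤ N) (hNodd : Odd N) {B : Finset (Finset (ZMod N))}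
    (hB : B ∈ phiSet (cadj N)) {A : Finset (ZMod N)}
    (hANA : ∀ x ∈ A, ∀ y ∈ A, ¬ cadj N x y)
    (hAsub : ∀ a ∈ A, ∃ I ∈ B, a ∈ I)
    (hAcard : N - 1 ≤ 2 * A.card) :
    2 * B.card = N - 1 ∧ ∀ R ∈ maxElts B, R.card + 1 = 2 * (A ∩ R).card := by
  have hBcard : B.card = ∑ R ∈ maxElts B, (Bsub B R).card := by
    conv_lhs => rw [roots_partition (B := B)]
    exact Finset.card_biUnion (fun R hR R' hR' hne =>
      Bsub_disjoint_of_inter_empty hB (roots_sep hN hB hR hR' hne).1)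
  have hRc : ∀ R ∈ maxElts B, 2 * (Bsub B R).card = R.card + 1 := by
    intro R hR
    have h1 := UB1 hN hNodd hB R.card R (maxElts_subset hR) (le_refl _)
    have h2 := LB1 hN hNodd hB R.card R (maxElts_subset hR) (le_refl _)
    omega
  have hpack : ∑ R ∈ maxElts B, (R.card + 1) ≤ N := by
    have := pack_bound (T := (Finset.univ : Finset (ZMod N))) (C := maxElts B)
      (fun J _ => Finset.subset_univ J)
      (fun J hJ => by
        obtain ⟨u, h1, h2⟩ := member_ext hN hNodd hB (maxElts_subset hJ)
        exact ⟨u, h1, h2, Finset.mem_univ _⟩)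
      (fun J hJ J' hJ' hne => (roots_sep hN hB hJ hJ' hne).1)
      (fun J hJ J' hJ' hne => (roots_sep hN hB hJ hJ' hne).2)
    rwa [Finset.card_univ, ZMod.card] at this
  have hAeq : A = (maxElts B).biUnion (fun R => A ∩ R) := by
    apply Finset.Subset.antisymm
    · intro a ha
      obtain ⟨I, hI, haI⟩ := hAsub a ha
      obtain ⟨R, hR, hIR⟩ := exists_max hI
      exact Finset.mem_biUnion.2 ⟨R, hR, Finset.mem_inter.2 ⟨ha, hIR haI⟩⟩
    · intro a ha
      obtain ⟨R, _, haR⟩ := Finset.mem_biUnion.1 ha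
      exact (Finset.mem_inter.1 haR).1
  have hAcard2 : A.card = ∑ R ∈ maxElts B, (A ∩ R).card := by
    conv_lhs => rw [hAeq]
    apply Finset.card_biUnion
    intro R hR R' hR' hne
    rw [Function.onFun, Finset.disjoint_left]
    intro x hx hx'
    have h1 := (Finset.mem_inter.1 hx).2
    have h2 := (Finset.mem_inter.1 hx').2
    have : x ∈ R ∩ R' := Finset.mem_inter.2 ⟨h1, h2⟩
    rw [(roots_sep hN hB hR hR' hne).1] at this
    exact absurd this (Finset.notMem_empty x)
  have hAR : ∀ R ∈ maxElts B, 2 * (A ∩ R).card ≤ R.card + 1 := by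
    intro R hR
    obtain ⟨b, M, hRb, hModd, hM1, hM2, hcardR⟩ :=
      member_arc hN hNodd (hB.1 R (maxElts_subset hR))
    rw [hcardR]
    apply indep_in_arc (b := b) (M := M) (by omega)
    · rw [← hRb]; exact Finset.inter_subset_right
    · intro x hx y hy
      exact hANA x (Finset.mem_inter.1 hx).1 y (Finset.mem_inter.1 hy).1
  -- chain of (in)equalities
  have hs1 : ∑ R ∈ maxElts B, 2 * (A ∩ R).card ≤ ∑ R ∈ maxElts B, (R.card + 1) :=
    Finset.sum_le_sum hAR
  have hs2 : ∑ R ∈ maxElts B, 2 * (A ∩ R).card = 2 * A.card := by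
    rw [hAcard2, Finset.mul_sum]
  have hs3 : ∑ R ∈ maxElts B, (R.card + 1) = 2 * B.card := by
    rw [hBcard, Finset.mul_sum]
    exact Finset.sum_congr rfl (fun R hR => (hRc R hR).symm)
  rcases hNodd with ⟨nn, hnn⟩
  have hBN : 2 * B.card = N - 1 := by omega
  refine ⟨hBN, ?_⟩
  have hseq : ∑ R ∈ maxElts B, 2 * (A ∩ R).card = ∑ R ∈ maxElts B, (R.card + 1) := by omega
  have := (Finset.sum_eq_sum_iff_of_le hAR).1 hseq
  intro R hR
  exact (this R hR).symm

end St13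
namespace St13
open Finset

variable {N : ℕ}

lemma zmod2_cases : ∀ c : ZMod 2, c = 0 ∨ c = 1 := by decide

lemma vbar_add_self [NeZero N] (w : VbarN N) : w + w = 0 := by
  have h2 : (2 : ZMod 2) = 0 := rfl
  calc w + w = (2 : ZMod 2) • w := (two_smul (ZMod 2) w).symm
    _ = (0 : ZMod 2) • w := by rw [h2]
    _ = 0 := zero_smul _ _

lemma ebar_eSum [NeZero N] (I : Finset (ZMod N)) :
    eSum (ebar N) I = piQ N (eSum (eVec N) I) := by
  unfold eSum ebar
  rw [map_sum]

/-- reduce span membership to subset sums -/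
lemma span_red [NeZero N] {B : Finset (Finset (ZMod N))} {v : Vc N}
    (h : piQ N v ∈ LB (ebar N) B) :
    ∃ B', B' ⊆ B ∧ ((∑ I ∈ B', eSum (eVec N) I) = v ∨
      (∑ I ∈ B', eSum (eVec N) I) = v + eSum (eVec N) Finset.univ) := by
  classical
  let SubM : Submodule (ZMod 2) (VbarN N) :=
    { carrier := {x | ∃ B', B' ⊆ B ∧ x = ∑ I ∈ B', piQ N (eSum (eVec N) I)}
      add_mem' := by
        rintro x y ⟨B1, h1, rfl⟩ ⟨B2, h2, rfl⟩
        refine ⟨(B1 ∪ B2) \ (B1 ∩ B2), ?_, ?_⟩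
        · intro K hK
          rcases Finset.mem_union.1 (Finset.mem_sdiff.1 hK).1 with hx | hx
          · exact h1 hx
          · exact h2 hx
        · have e1 := Finset.sum_union_inter (s₁ := B1) (s₂ := B2)
            (f := fun I => piQ N (eSum (eVec N) I))
          have e2 := Finset.sum_sdiff (f := fun I => piQ N (eSum (eVec N) I))
            (Finset.inter_subset_union (s := B1) (t := B2))
          have e3 : ∑ I ∈ B1 ∩ B2, piQ N (eSum (eVec N) I)
              + ∑ I ∈ B1 ∩ B2, piQ N (eSum (eVec N) I) = 0 := vbar_add_self _
          calc ∑ I ∈ B1, piQ N (eSum (eVec N) I) + ∑ I ∈ B2, piQ N (eSum (eVec N) I)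
              = ∑ I ∈ B1 ∪ B2, piQ N (eSum (eVec N) I)
                + ∑ I ∈ B1 ∩ B2, piQ N (eSum (eVec N) I) := e1.symm
            _ = (∑ I ∈ (B1 ∪ B2) \ (B1 ∩ B2), piQ N (eSum (eVec N) I)
                + ∑ I ∈ B1 ∩ B2, piQ N (eSum (eVec N) I))
                + ∑ I ∈ B1 ∩ B2, piQ N (eSum (eVec N) I) := by rw [e2]
            _ = ∑ I ∈ (B1 ∪ B2) \ (B1 ∩ B2), piQ N (eSum (eVec N) I)
                + (∑ I ∈ B1 ∩ B2, piQ N (eSum (eVec N) I)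
                + ∑ I ∈ B1 ∩ B2, piQ N (eSum (eVec N) I)) := by rw [add_assoc]
            _ = ∑ I ∈ (B1 ∪ B2) \ (B1 ∩ B2), piQ N (eSum (eVec N) I) := by
                rw [e3, add_zero]
      zero_mem' := ⟨∅, Finset.empty_subset B, (Finset.sum_empty).symm⟩
      smul_mem' := by
        rintro c x ⟨B', hs, rfl⟩
        rcases zmod2_cases c with rfl | rfl
        · rw [zero_smul]
          exact ⟨∅, Finset.empty_subset B, (Finset.sum_empty).symm⟩
        · rw [one_smul]
          exact ⟨B', hs, rfl⟩ }
  have hle : LB (ebar N) B ≤ SubM := by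
    rw [LB, Submodule.span_le]
    rintro x ⟨I, hI, rfl⟩
    refine ⟨{I}, Finset.singleton_subset_iff.2 hI, ?_⟩
    show eSum (ebar N) I = ∑ J ∈ ({I} : Finset (Finset (ZMod N))), piQ N (eSum (eVec N) J)
    rw [Finset.sum_singleton, ebar_eSum]
  obtain ⟨B', hsub, heq⟩ := hle h
  have heq2 : piQ N v = piQ N (∑ I ∈ B', eSum (eVec N) I) := by
    rw [heq, map_sum]
  have hmem : (∑ I ∈ B', eSum (eVec N) I) - v ∈ radN N := by
    have : piQ N (∑ I ∈ B', eSum (eVec N) I) = piQ N v := heq2.symm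
    unfold piQ at this
    rw [Submodule.mkQ_apply, Submodule.mkQ_apply, Submodule.Quotient.eq] at this
    exact this
  rw [radN, Submodule.mem_span_singleton] at hmem
  obtain ⟨c, hc⟩ := hmem
  rcases zmod2_cases c with rfl | rfl
  · rw [zero_smul] at hc
    exact ⟨B', hsub, Or.inl (by have := hc.symm; rwa [sub_eq_zero] at this)⟩
  · rw [one_smul] at hc
    refine ⟨B', hsub, Or.inr ?_⟩
    have : (∑ I ∈ B', eSum (eVec N) I) - v = eSum (eVec N) Finset.univ := hc.symm
    have h2 := congrArg (· + v) this
    simp only [sub_add_cancel] at h2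
    rw [h2]
    ring

/-- Q vanishes on the indicator of a pairwise non-adjacent set -/
lemma Qf_NA [NeZero N] {X : Finset (ZMod N)} (hNA : ∀ x ∈ X, ∀ y ∈ X, ¬ cadj N x y) :
    Qf N (eSum (eVec N) X) = 0 := by
  rw [Qf_ind]
  have : X.filter (fun s => s + 1 ∈ X) = ∅ := by
    rw [Finset.eq_empty_iff_forall_notMem]
    intro x hx
    rw [Finset.mem_filter] at hx
    exact hNA x hx.1 (x + 1) hx.2 (cadj_succ x)
  rw [this]
  simp

/-- identify the complement of an adjacent pair as an arc -/
lemma compl_pair [NeZero N] (hN : 3 ≤ N) (t : ZMod N) :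
    Finset.univ \ ({t, t + 1} : Finset (ZMod N)) = arcF N (t + 2) (N - 2) := by
  ext x
  have hNpos : 0 < N := by omega
  set j := (x - t).val with hj
  have hjN : j < N := ZMod.val_lt _
  have hx : x = t + (j : ZMod N) := by
    rw [hj, ZMod.natCast_val, ZMod.cast_id]
    ring
  have hxt : x = t ↔ j = 0 := by
    constructor
    · intro h
      apply offset_eqZ (N := N) hjN hNpos
      rw [← hx, h]
      simp
    · intro h
      rw [hx, h]
      simp
  have hxt1 : x = t + 1 ↔ j = 1 := by
    constructor
    · intro h
      apply offset_eqZ (N := N) hjN (by omega)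
      rw [← hx, h]
      norm_num
    · intro h
      rw [hx, h]
      norm_num
  have harc : x ∈ arcF N (t + 2) (N - 2) ↔ 2 ≤ j := by
    rw [mem_arcF]
    constructor
    · rintro ⟨o, ho, hxo⟩
      have : x = t + ((2 + o : ℕ) : ZMod N) := by
        rw [hxo]
        push_cast
        ring
      rw [hx] at this
      have := offset_eqZ (N := N) hjN (by omega) this
      omega
    · intro h2
      refine ⟨j - 2, by omega, ?_⟩
      rw [hx]
      push_cast [Nat.cast_sub (by omega : 2 ≤ j)]
      ring
  simp only [Finset.mem_sdiff, Finset.mem_univ, true_and, Finset.mem_insert,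
    Finset.mem_singleton, harc]
  rw [not_or, hxt, hxt1]
  omega

/-- identify IoddF of an arc -/
lemma IoddF_arc [NeZero N] (hN : 3 ≤ N) {a : ZMod N} {L : ℕ} (hL : L ≤ N - 2) (hLodd : Odd L) :
    IoddF (cadj N) (arcF N a L) = evIF N a L := by
  classical
  ext x
  rw [IoddF, Finset.mem_filter]
  constructor
  · rintro ⟨hxI, hxnI⟩
    obtain ⟨o, ho, rfl⟩ := mem_arcF.1 hxI
    rw [Iev_eq_oddIF hN hL hLodd] at hxnI
    refine mem_evIF.2 ⟨o, ho, ?_, rfl⟩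
    rw [← Nat.not_odd_iff_even]
    intro hodd
    exact hxnI (Finset.mem_coe.2 (mem_oddIF.2 ⟨o, ho, hodd, rfl⟩))
  · intro hx
    obtain ⟨o, ho, hev, rfl⟩ := mem_evIF.1 hx
    refine ⟨mem_arcF.2 ⟨o, ho, rfl⟩, ?_⟩
    rw [Iev_eq_oddIF hN hL hLodd]
    intro hmem
    obtain ⟨o', ho', hodd', hx'⟩ := mem_oddIF.1 (Finset.mem_coe.1 hmem)
    have := offset_eqZ (N := N) (by omega) (by omega) hx'
    subst this
    exact (Nat.not_odd_iff_even.2 hev) hodd'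

/-- avoidance of t and t+1 -/
lemma supp_avoid [NeZero N] (hN : 3 ≤ N) (hNodd : Odd N) {B : Finset (Finset (ZMod N))}
    (hB : B ∈ phiSet (cadj N)) {A : Finset (ZMod N)} {t : ZMod N}
    (heq : ∀ R ∈ maxElts B, R.card + 1 = 2 * (A ∩ R).card)
    (hANA : ∀ x ∈ A, ∀ y ∈ A, ¬ cadj N x y)
    (htA : t ∉ A) (ht1A : t + 1 ∉ A) :
    t ∉ suppB B ∧ t + 1 ∉ suppB B := by
  have hroot : ∀ s : ZMod N, s ∈ suppB B → ∃ R ∈ maxElts B, s ∈ R := by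
    intro s hs
    obtain ⟨I, hI, hsI⟩ := Finset.mem_biUnion.1 hs
    obtain ⟨R, hR, hIR⟩ := exists_max hI
    exact ⟨R, hR, hIR hsI⟩
  have hpattern : ∀ R ∈ maxElts B, ∃ b M, R = arcF N b M ∧ Odd M ∧ 1 ≤ M ∧ M ≤ N - 2 ∧
      (∀ o < M, (b + (o : ZMod N) ∈ A ↔ Even o)) := by
    intro R hR
    obtain ⟨b, M, hRb, hModd, hM1, hM2, hcardR⟩ :=
      member_arc hN hNodd (hB.1 R (maxElts_subset hR))
    refine ⟨b, M, hRb, hModd, hM1, hM2, ?_⟩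
    have h3 := heq R hR
    rw [hcardR] at h3
    have hpat := indep_in_arc_eq (b := b) (M := M) (T := A ∩ R) (by omega)
      (by rw [hRb]; exact Finset.inter_subset_right)
      (fun x hx y hy => hANA x (Finset.mem_inter.1 hx).1 y (Finset.mem_inter.1 hy).1)
      (by omega)
    intro o ho
    rw [← hpat o ho, Finset.mem_inter, hRb]
    constructor
    · intro h
      exact ⟨h, mem_arcF.2 ⟨o, ho, rfl⟩⟩
    · intro h
      exact h.1
  constructor
  · intro hsup
    obtain ⟨R, hR, htR⟩ := hroot t hsup
    obtain ⟨b, M, hRb, hModd, hM1, hM2, hpat⟩ := hpattern R hR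
    rw [hRb] at htR
    obtain ⟨o, ho, hto⟩ := mem_arcF.1 htR
    by_cases hev : Even o
    · exact htA (hto ▸ (hpat o ho).2 hev)
    · have ho1 : o + 1 < M := by
        rcases hModd with ⟨m, hm⟩
        rw [Nat.even_iff] at hev
        omega
      have := (hpat (o + 1) ho1).2 (by rw [Nat.even_add_one]; exact hev)
      apply ht1A
      rw [hto]
      rwa [show b + ((o + 1 : ℕ) : ZMod N) = b + (o : ZMod N) + 1 by push_cast; ring] at this
  · intro hsup
    obtain ⟨R, hR, htR⟩ := hroot (t + 1) hsup
    obtain ⟨b, M, hRb, hModd, hM1, hM2, hpat⟩ := hpattern R hR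
    rw [hRb] at htR
    obtain ⟨o, ho, hto⟩ := mem_arcF.1 htR
    by_cases hev : Even o
    · exact ht1A (hto ▸ (hpat o ho).2 hev)
    · have ho1 : 1 ≤ o := by
        rcases Nat.eq_zero_or_pos o with h | h
        · exfalso; apply hev; rw [h]; exact Even.zero
        · omega
      have hm := (hpat (o - 1) (by omega)).2 (by
        rcases Nat.odd_iff.1 (Nat.not_even_iff_odd.1 hev) with h
        rw [Nat.even_iff]
        omega)
      apply htA
      have : b + ((o - 1 : ℕ) : ZMod N) = t := by
        rw [Nat.cast_sub ho1]
        push_cast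
        have : b + (o : ZMod N) = t + 1 := hto.symm
        linear_combination this
      rwa [this] at hm
  
end St13
namespace St13
open Finset

variable {N : ℕ}

lemma key [NeZero N] (hN : 3 ≤ N) (hodd : Odd N) (t : ZMod N)
    (B : Finset (Finset (ZMod N))) (hB : B ∈ phiSet (cadj N))
    (h : piQ N (eSum (eVec N)
        (IoddF (cadj N) (Finset.univ \ ({t, t + 1} : Finset (ZMod N))))) ∈ LB (ebar N) B) :
    suppB B ∩ ({t, t + 1} : Finset (ZMod N)) = ∅ ∧ B.card = (N - 1) / 2 := by
  have hN2odd : Odd (N - 2) := by rcases hodd with ⟨m, hm⟩; exact ⟨m - 1, by omega⟩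
  set A := evIF N (t + 2) (N - 2) with hA
  have hIod : IoddF (cadj N) (Finset.univ \ ({t, t + 1} : Finset (ZMod N))) = A := by
    rw [compl_pair hN t, IoddF_arc hN (le_refl _) hN2odd]
  rw [hIod] at h
  have hANA : ∀ x ∈ A, ∀ y ∈ A, ¬ cadj N x y := evIF_NA hN (le_refl _)
  have hAcard : 2 * A.card = N - 1 := by
    rw [hA, card_evIF (by omega)]
    rcases hodd with ⟨m, hm⟩
    omega
  have htA : t ∉ A := by
    intro hmem
    obtain ⟨o, ho, _, hx⟩ := mem_evIF.1 hmem
    rw [show t + 2 + ((o : ℕ) : ZMod N) = t + ((2 + o : ℕ) : ZMod N) by push_cast; ring] at hx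
    have e2 : t + ((0 : ℕ) : ZMod N) = t + ((2 + o : ℕ) : ZMod N) := by
      simpa using hx
    have := offset_eqZ (N := N) (by omega) (by omega) e2
    omega
  have ht1A : t + 1 ∉ A := by
    intro hmem
    obtain ⟨o, ho, _, hx⟩ := mem_evIF.1 hmem
    rw [show t + 2 + ((o : ℕ) : ZMod N) = t + ((2 + o : ℕ) : ZMod N) by push_cast; ring] at hx
    have e2 : t + ((1 : ℕ) : ZMod N) = t + ((2 + o : ℕ) : ZMod N) := by
      simpa using hx
    have := offset_eqZ (N := N) (by omega) (by omega) e2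
    omega
  obtain ⟨B', hsub, hcase⟩ := span_red h
  have hQ := Qf_subset_sum hN hodd hB B' hsub
  have hxA : (∑ I ∈ B', eSum (eVec N) I) = eSum (eVec N) A := by
    rcases hcase with h1 | h1
    · exact h1
    · exfalso
      rw [h1, Qf_add, Qf_NA hANA, Qf_univ hodd, Bf_univ] at hQ
      norm_num at hQ
  have hAsub : ∀ a ∈ A, ∃ I ∈ B, a ∈ I := by
    intro a ha
    by_contra hcon
    push_neg at hcon
    have h1 := congrFun hxA a
    rw [Finset.sum_apply, eSum_apply, if_pos ha] at h1
    have h2 : ∀ I ∈ B', eSum (eVec N) I a = 0 := by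
      intro I hI
      rw [eSum_apply, if_neg (hcon I (hsub hI))]
    rw [Finset.sum_congr rfl h2, Finset.sum_const, smul_zero] at h1
    exact one_ne_zero h1.symm
  obtain ⟨hBN, heqR⟩ := roots_count hN hodd hB hANA hAsub (by omega)
  obtain ⟨ht, ht1⟩ := supp_avoid hN hodd hB heqR hANA htA ht1A
  constructor
  · rw [Finset.eq_empty_iff_forall_notMem]
    intro x hx
    rw [Finset.mem_inter, Finset.mem_insert, Finset.mem_singleton] at hx
    rcases hx.2 with rfl | rfl
    · exact ht hx.1
    · exact ht1 hx.1
  · omega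

end St13

/-- if `[ee] ∈ L_B` then `supp(B) ∩ ee = ∅` and `|B| = (N-1)/2`. -/
theorem statement13 (N : ℕ) [NeZero N] (hN : 3 ≤ N) (hodd : Odd N)
    (t t' : ZMod N) (hadj : cadj N t t')
    (B : Finset (Finset (ZMod N))) (hB : B ∈ phiSet (cadj N))
    (h : piQ N (eSum (eVec N)
        (IoddF (cadj N) (Finset.univ \ ({t, t'} : Finset (ZMod N))))) ∈ LB (ebar N) B) :
    suppB B ∩ ({t, t'} : Finset (ZMod N)) = ∅ ∧ B.card = (N - 1) / 2 := by
  rcases hadj with h1 | h1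
  · subst h1
    exact St13.key hN hodd t B hB h
  · subst h1
    have hpair : ({t' + 1, t'} : Finset (ZMod N)) = {t', t' + 1} := Finset.pair_comm _ _
    rw [hpair] at h ⊢
    exact St13.key hN hodd t' B hB h
end

section
/- Let N ≥ 3 be odd, (S,E) the cycle of length N, Vbar = V/(F·e_S), and fix an edge ee in E. Let B in phi(Vbar). If supp(B) ∩ ee = ∅ and |B| = (N−1)/2, then [ee] lies in L_B. -/
/-! ### Auxiliary lemmas for Statement 14 -/

section Stmt14Aux

variable {N : ℕ}

lemma th_inj [NeZero N] {t : ZMod N} {k l : ℕ} (hk : k < N) (hl : l < N)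
    (h : (t + 2 + (k : ZMod N)) = t + 2 + (l : ZMod N)) : k = l := by
  have h2 : (k : ZMod N) = l := by
    have := add_left_cancel h
    exact this
  have h3 := congrArg ZMod.val h2
  rwa [ZMod.val_cast_of_lt hk, ZMod.val_cast_of_lt hl] at h3

lemma th_surj [NeZero N] (t x : ZMod N) :
    x = t + 2 + (((x - t - 2).val : ℕ) : ZMod N) := by
  have : (((x - t - 2).val : ℕ) : ZMod N) = x - t - 2 := by
    simp [ZMod.natCast_val, ZMod.cast_id]
  rw [this]; ring

lemma th_t (hN : 3 ≤ N) (t : ZMod N) : t + 2 + (((N - 2 : ℕ)) : ZMod N) = t := by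
  have : ((2 : ℕ) : ZMod N) + ((N - 2 : ℕ) : ZMod N) = ((N : ℕ) : ZMod N) := by
    rw [← Nat.cast_add]; congr 1; omega
  have h2 : ((N : ℕ) : ZMod N) = 0 := ZMod.natCast_self N
  push_cast at this
  rw [add_assoc, this, h2, add_zero]

lemma th_t1 (hN : 3 ≤ N) (t : ZMod N) : t + 2 + (((N - 1 : ℕ)) : ZMod N) = t + 1 := by
  have : ((2 : ℕ) : ZMod N) + ((N - 1 : ℕ) : ZMod N) = ((N : ℕ) : ZMod N) + 1 := by
    rw [← Nat.cast_add]
    have : 2 + (N - 1) = N + 1 := by omega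
    rw [this]; push_cast; ring
  have h2 : ((N : ℕ) : ZMod N) = 0 := ZMod.natCast_self N
  push_cast at this
  rw [add_assoc, this, h2, zero_add]

lemma th_adj [NeZero N] (hN : 3 ≤ N) {t : ZMod N} {k l : ℕ} (hk : k ≤ N - 2) (hl : l ≤ N - 2) :
    cadj N (t + 2 + (k : ZMod N)) (t + 2 + (l : ZMod N)) ↔ (l = k + 1 ∨ k = l + 1) := by
  constructor
  · rintro (h | h)
    · left
      have h2 : (t + 2 + ((l : ℕ) : ZMod N)) = t + 2 + (((k + 1 : ℕ)) : ZMod N) := by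
        rw [h]; push_cast; ring
      exact th_inj (by omega) (by omega) h2
    · right
      have h2 : (t + 2 + ((k : ℕ) : ZMod N)) = t + 2 + (((l + 1 : ℕ)) : ZMod N) := by
        rw [h]; push_cast; ring
      exact th_inj (by omega) (by omega) h2
  · rintro (h | h)
    · subst h; left; push_cast; ring
    · subst h; right; push_cast; ring

lemma arc_mem [NeZero N] {t : ZMod N} {a b k : ℕ} (hk : k < N) (hb : b < N) :
    (t + 2 + (k : ZMod N)) ∈ (Finset.Icc a b).image (fun j : ℕ => t + 2 + (j : ZMod N))
      ↔ (a ≤ k ∧ k ≤ b) := by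
  simp only [Finset.mem_image, Finset.mem_Icc]
  constructor
  · rintro ⟨j, ⟨hj1, hj2⟩, hj3⟩
    have : j = k := th_inj (by omega) hk hj3
    omega
  · intro h
    exact ⟨k, ⟨h.1, h.2⟩, rfl⟩

lemma card_arc [NeZero N] {t : ZMod N} {a b : ℕ} (hb : b < N) :
    ((Finset.Icc a b).image (fun j : ℕ => t + 2 + (j : ZMod N))).card = b + 1 - a := by
  rw [Finset.card_image_of_injOn, Nat.card_Icc]
  intro k hk l hl h
  simp only [Finset.coe_Icc, Set.mem_Icc] at hk hl
  exact th_inj (by omega) (by omega) h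

lemma J_eq [NeZero N] (hN : 3 ≤ N) (t : ZMod N) :
    (Finset.univ \ {t, t + 1} : Finset (ZMod N)) =
      (Finset.range (N - 2)).image (fun k : ℕ => t + 2 + (k : ZMod N)) := by
  ext x
  simp only [Finset.mem_sdiff, Finset.mem_univ, Finset.mem_insert, Finset.mem_singleton,
    Finset.mem_image, Finset.mem_range, true_and]
  constructor
  · intro hx
    push_neg at hx
    refine ⟨(x - t - 2).val, ?_, (th_surj t x).symm⟩
    have hlt : (x - t - 2).val < N := ZMod.val_lt _
    by_contra hge
    have h1 : (x - t - 2).val = N - 2 ∨ (x - t - 2).val = N - 1 := by omega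
    rcases h1 with h1 | h1
    · exact hx.1 (by rw [th_surj t x, h1, th_t hN])
    · exact hx.2 (by rw [th_surj t x, h1, th_t1 hN])
  · rintro ⟨k, hk, rfl⟩
    push_neg
    constructor
    · intro h
      have h2 : t + 2 + ((k : ℕ) : ZMod N) = t + 2 + (((N - 2 : ℕ)) : ZMod N) := by
        rw [th_t hN, h]
      have := th_inj (by omega) (by omega) h2
      omega
    · intro h
      have h2 : t + 2 + ((k : ℕ) : ZMod N) = t + 2 + (((N - 1 : ℕ)) : ZMod N) := by
        rw [th_t1 hN, h]
      have := th_inj (by omega) (by omega) h2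
      omega

lemma cadj_symm {i j : ZMod N} (h : cadj N i j) : cadj N j i := h.symm

lemma arc_conn [NeZero N] (hN : 3 ≤ N) {t : ZMod N} {a b : ℕ} (hb : b ≤ N - 2) :
    ConnOn (cadj N) ((Finset.Icc a b).image (fun j : ℕ => t + 2 + (j : ZMod N))) := by
  set X := (Finset.Icc a b).image (fun j : ℕ => t + 2 + (j : ZMod N)) with hX
  have key : ∀ q, a ≤ q → q ≤ b →
      Relation.ReflTransGen (fun u v => u ∈ X ∧ v ∈ X ∧ cadj N u v)
        (t + 2 + (a : ZMod N)) (t + 2 + (q : ZMod N)) := by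
    intro q
    induction q with
    | zero =>
      intro h1 h2
      have ha0 : a = 0 := by omega
      subst ha0
      exact Relation.ReflTransGen.refl
    | succ n ih =>
      intro h1 h2
      rcases Nat.lt_or_ge n a with h | h
      · have : a = n + 1 := by omega
        subst this; exact Relation.ReflTransGen.refl
      · refine Relation.ReflTransGen.tail (ih h (by omega)) ?_
        refine ⟨?_, ?_, ?_⟩
        · rw [hX]; exact Finset.mem_image_of_mem _ (Finset.mem_Icc.mpr ⟨h, by omega⟩)
        · rw [hX]; exact Finset.mem_image_of_mem _ (Finset.mem_Icc.mpr ⟨by omega, by omega⟩)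
        · exact (th_adj hN (by omega) (by omega)).mpr (Or.inl rfl)
  intro u hu v hv
  have hsymm : Symmetric (fun u v => u ∈ X ∧ v ∈ X ∧ cadj N u v) := by
    rintro x y ⟨h1, h2, h3⟩; exact ⟨h2, h1, cadj_symm h3⟩
  rw [hX] at hu hv
  simp only [Finset.mem_image, Finset.mem_Icc] at hu hv
  obtain ⟨p, ⟨hp1, hp2⟩, rfl⟩ := hu
  obtain ⟨q, ⟨hq1, hq2⟩, rfl⟩ := hv
  exact Relation.ReflTransGen.trans
    ((@Relation.ReflTransGen.stdSymm _ _ ⟨fun a b h => hsymm h⟩).symm _ _ (key p hp1 hp2)) (key q hq1 hq2)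

lemma no_cross [NeZero N] (hN : 3 ≤ N) {t : ZMod N} {K : Finset ℕ}
    (hK : ∀ k ∈ K, k ≤ N - 2) {g : ℕ} (hg : g ∉ K) {x y : ZMod N}
    (hchain : Relation.ReflTransGen
      (fun u v => u ∈ K.image (fun j : ℕ => t + 2 + (j : ZMod N)) ∧
        v ∈ K.image (fun j : ℕ => t + 2 + (j : ZMod N)) ∧ cadj N u v) x y)
    {p : ℕ} (hp : p ∈ K) (hxp : x = t + 2 + (p : ZMod N)) (hplt : p < g) :
    ∀ q ∈ K, y = t + 2 + (q : ZMod N) → q < g := by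
  induction hchain with
  | refl =>
    intro q hq hyq
    have hp' := hK p hp
    have hq' := hK q hq
    rw [hxp] at hyq
    have : p = q := th_inj (by omega) (by omega) hyq
    omega
  | tail hab hbc ih =>
    intro q hq hyq
    obtain ⟨hb1, _, hadj⟩ := hbc
    simp only [Finset.mem_image] at hb1
    obtain ⟨r, hr, hrb⟩ := hb1
    have hrg : r < g := ih r hr hrb.symm
    subst hyq
    rw [← hrb] at hadj
    have := (th_adj hN (hK r hr) (hK q hq)).mp hadj
    have : q ≠ g := fun h => hg (h ▸ hq)
    omega

lemma arc_not_conn [NeZero N] (hN : 3 ≤ N) {t : ZMod N} {a b a' b' g : ℕ}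
    (hab : a ≤ b) (ha'b' : a' ≤ b') (hbg : b < g) (hga' : g < a') (hb' : b' ≤ N - 2) :
    ¬ ConnOn (cadj N) ((Finset.Icc a b).image (fun j : ℕ => t + 2 + (j : ZMod N)) ∪
      (Finset.Icc a' b').image (fun j : ℕ => t + 2 + (j : ZMod N))) := by
  intro hconn
  set K := Finset.Icc a b ∪ Finset.Icc a' b' with hKdef
  have himg : (Finset.Icc a b).image (fun j : ℕ => t + 2 + (j : ZMod N)) ∪
      (Finset.Icc a' b').image (fun j : ℕ => t + 2 + (j : ZMod N)) =
      K.image (fun j : ℕ => t + 2 + (j : ZMod N)) := (Finset.image_union _ _).symm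
  rw [himg] at hconn
  have hK : ∀ k ∈ K, k ≤ N - 2 := by
    intro k hk
    rw [hKdef] at hk
    simp only [Finset.mem_union, Finset.mem_Icc] at hk
    omega
  have hg : g ∉ K := by
    rw [hKdef]
    simp only [Finset.mem_union, Finset.mem_Icc]
    omega
  have ha : (t + 2 + (a : ZMod N)) ∈ K.image (fun j : ℕ => t + 2 + (j : ZMod N)) := by
    refine Finset.mem_image_of_mem _ ?_
    rw [hKdef]; simp only [Finset.mem_union, Finset.mem_Icc]; omega
  have ha' : (t + 2 + (a' : ZMod N)) ∈ K.image (fun j : ℕ => t + 2 + (j : ZMod N)) := by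
    refine Finset.mem_image_of_mem _ ?_
    rw [hKdef]; simp only [Finset.mem_union, Finset.mem_Icc]; omega
  have hchain := hconn _ ha _ ha'
  have := no_cross hN hK hg hchain (p := a)
    (by rw [hKdef]; simp only [Finset.mem_union, Finset.mem_Icc]; omega) rfl (by omega)
    a' (by rw [hKdef]; simp only [Finset.mem_union, Finset.mem_Icc]; omega) rfl
  omega

lemma walk_mono (m : ℕ) (F : ℕ → ZMod N)
    (hinj : ∀ i j, i ≤ m → j ≤ m → F i = F j → i = j)
    (hstep : ∀ i, i + 1 ≤ m → cadj N (F i) (F (i + 1)))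
    (h1 : 1 ≤ m → F 1 = F 0 + 1) :
    ∀ i ≤ m, F i = F 0 + (i : ZMod N) := by
  intro i
  induction i using Nat.strong_induction_on with
  | _ i ih =>
    intro hi
    match i, hi with
    | 0, _ => simp
    | 1, hh => simpa using h1 hh
    | (j + 2), hj =>
      have e1 : F (j + 1) = F 0 + ((j + 1 : ℕ) : ZMod N) := ih (j + 1) (by omega) (by omega)
      have e0 : F j = F 0 + ((j : ℕ) : ZMod N) := ih j (by omega) (by omega)
      rcases hstep (j + 1) (by omega) with h | h
      · rw [h, e1]; push_cast; ring
      · exfalso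
        have hFF : F (j + 2) = F j := by
          have h2 : F (j + 2) = F (j + 1) - 1 := by rw [h]; ring
          rw [h2, e1, e0]; push_cast; ring
        have := hinj _ _ (by omega) (by omega) hFF
        omega

lemma path_is_arc [NeZero N] {I : Finset (ZMod N)} (h : IsPathOn (cadj N) I) :
    ∃ (c : ZMod N) (m : ℕ), I.card = m + 1 ∧
      I = (Finset.range (m + 1)).image (fun k : ℕ => c + (k : ZMod N)) := by
  obtain ⟨m, f, hinj, himg, hadj⟩ := h
  have hcard : I.card = m + 1 := by
    rw [himg, Finset.card_image_of_injective _ hinj, Finset.card_univ, Fintype.card_fin]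
  set F : ℕ → ZMod N := fun i => f ⟨i % (m + 1), Nat.mod_lt i (Nat.succ_pos m)⟩ with hF
  have hFeq : ∀ i (hi : i ≤ m), F i = f ⟨i, by omega⟩ := by
    intro i hi
    simp only [hF]
    congr 1
    exact Fin.ext (Nat.mod_eq_of_lt (by omega))
  have hFinj : ∀ i j, i ≤ m → j ≤ m → F i = F j → i = j := by
    intro i j hi hj hij
    rw [hFeq i hi, hFeq j hj] at hij
    have := hinj hij
    simpa [Fin.ext_iff] using this
  have hFstep : ∀ i, i + 1 ≤ m → cadj N (F i) (F (i + 1)) := by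
    intro i hi
    rw [hFeq i (by omega), hFeq (i + 1) (by omega)]
    exact (hadj _ _).mpr (Or.inl rfl)
  have hIF : I = (Finset.range (m + 1)).image F := by
    rw [himg]
    ext x
    simp only [Finset.mem_image, Finset.mem_univ, true_and, Finset.mem_range]
    constructor
    · rintro ⟨i, rfl⟩
      exact ⟨(i : ℕ), i.isLt, by rw [hFeq _ (by omega)]⟩
    · rintro ⟨i, hi, rfl⟩
      exact ⟨⟨i, hi⟩, by rw [hFeq _ (by omega)]⟩
  by_cases hm : m = 0
  · subst hm
    refine ⟨F 0, 0, hcard, ?_⟩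
    rw [hIF]
    apply Finset.image_congr
    intro k hk
    simp only [Finset.coe_range, Set.mem_Iio] at hk
    interval_cases k
    simp
  · rcases hFstep 0 (by omega) with hd | hd
    · refine ⟨F 0, m, hcard, ?_⟩
      rw [hIF]
      apply Finset.image_congr
      intro k hk
      simp only [Finset.coe_range, Set.mem_Iio] at hk
      exact walk_mono m F hFinj hFstep (fun _ => hd) k (by omega)
    · -- decreasing walk: use G = -F
      have hGinj : ∀ i j, i ≤ m → j ≤ m → (-F i) = (-F j) → i = j := by
        intro i j hi hj hij
        exact hFinj i j hi hj (neg_injective hij)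
      have hGstep : ∀ i, i + 1 ≤ m → cadj N (-F i) (-F (i + 1)) := by
        intro i hi
        rcases hFstep i hi with h | h
        · right; rw [h]; ring
        · left; rw [h]; ring
      have hG1 : 1 ≤ m → -F 1 = -F 0 + 1 := by
        intro _
        rw [show F 0 = F 1 + 1 from hd]; ring
      have hall : ∀ i ≤ m, F i = F 0 - (i : ZMod N) := by
        intro i hi
        have := walk_mono m (fun i => -F i) hGinj hGstep hG1 i hi
        have : F i = -(-F 0 + (i : ZMod N)) := by rw [← this]; ring
        rw [this]; ring
      refine ⟨F 0 - (m : ZMod N), m, hcard, ?_⟩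
      rw [hIF]
      ext x
      simp only [Finset.mem_image, Finset.mem_range]
      constructor
      · rintro ⟨i, hi, rfl⟩
        refine ⟨m - i, by omega, ?_⟩
        rw [hall i (by omega)]
        have : ((m - i : ℕ) : ZMod N) = (m : ZMod N) - (i : ZMod N) := by
          push_cast [Nat.cast_sub (by omega : i ≤ m)]; ring
        rw [this]; ring
      · rintro ⟨k, hk, rfl⟩
        refine ⟨m - k, by omega, ?_⟩
        rw [hall (m - k) (by omega)]
        have : ((m - k : ℕ) : ZMod N) = (m : ZMod N) - (k : ZMod N) := by
          push_cast [Nat.cast_sub (by omega : k ≤ m)]; ring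
        rw [this]; ring

lemma exists_arc [NeZero N] (hN : 3 ≤ N) {t : ZMod N} {I : Finset (ZMod N)}
    (hpath : IsPathOn (cadj N) I) (hsub : I ⊆ Finset.univ \ {t, t + 1}) :
    ∃ a b : ℕ, a ≤ b ∧ b ≤ N - 3 ∧
      I = (Finset.Icc a b).image (fun j : ℕ => t + 2 + (j : ZMod N)) := by
  obtain ⟨c, m, hcard, himg⟩ := path_is_arc hpath
  set a := (c - t - 2).val with ha
  have hc : c = t + 2 + ((a : ℕ) : ZMod N) := th_surj t c
  have haN : a < N := ZMod.val_lt _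
  have hstep : ∀ k : ℕ, c + (k : ZMod N) = t + 2 + ((a + k : ℕ) : ZMod N) := by
    intro k; rw [hc]; push_cast; ring
  have hmem : ∀ k, k ≤ m → c + (k : ZMod N) ∈ I := by
    intro k hk
    rw [himg]
    exact Finset.mem_image_of_mem _ (Finset.mem_range.mpr (by omega))
  have hnot : ∀ x ∈ I, x ≠ t ∧ x ≠ t + 1 := by
    intro x hx
    have := hsub hx
    simp only [Finset.mem_sdiff, Finset.mem_univ, Finset.mem_insert, Finset.mem_singleton,
      true_and] at this
    push_neg at this
    exact this
  have hcI : c ∈ I := by simpa using hmem 0 (by omega)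
  have ha2 : a ≠ N - 2 := by
    intro h
    exact (hnot c hcI).1 (by rw [hc, h, th_t hN])
  have ha1 : a ≠ N - 1 := by
    intro h
    exact (hnot c hcI).2 (by rw [hc, h, th_t1 hN])
  have haB : a ≤ N - 3 := by omega
  have hamB : a + m ≤ N - 3 := by
    by_contra hcon
    have hk : N - 2 - a ≤ m := by omega
    have := hmem (N - 2 - a) hk
    have he : c + ((N - 2 - a : ℕ) : ZMod N) = t := by
      rw [hstep]
      have : a + (N - 2 - a) = N - 2 := by omega
      rw [this, th_t hN]
    rw [he] at this
    exact (hnot t this).1 rfl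
  refine ⟨a, a + m, by omega, hamB, ?_⟩
  rw [himg]
  ext x
  simp only [Finset.mem_image, Finset.mem_range, Finset.mem_Icc]
  constructor
  · rintro ⟨k, hk, rfl⟩
    exact ⟨a + k, ⟨by omega, by omega⟩, (hstep k).symm⟩
  · rintro ⟨j, ⟨hj1, hj2⟩, rfl⟩
    refine ⟨j - a, by omega, ?_⟩
    rw [hstep]
    congr 2
    omega

lemma arc_path [NeZero N] (hN : 3 ≤ N) {t : ZMod N} {a b : ℕ} (hab : a ≤ b) (hb : b ≤ N - 2) :
    IsPathOn (cadj N) ((Finset.Icc a b).image (fun j : ℕ => t + 2 + (j : ZMod N))) := by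
  refine ⟨b - a, fun i => t + 2 + ((a + (i : ℕ) : ℕ) : ZMod N), ?_, ?_, ?_⟩
  · intro i j hij
    have hi : (i : ℕ) ≤ b - a := by omega
    have hj : (j : ℕ) ≤ b - a := by omega
    have := th_inj (k := a + (i : ℕ)) (l := a + (j : ℕ)) (by omega) (by omega) hij
    exact Fin.ext (by omega)
  · ext x
    simp only [Finset.mem_image, Finset.mem_Icc, Finset.mem_univ, true_and]
    constructor
    · rintro ⟨j, ⟨hj1, hj2⟩, rfl⟩
      refine ⟨⟨j - a, by omega⟩, ?_⟩
      congr 2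
      simp only [Fin.val_mk]
      omega
    · rintro ⟨i, rfl⟩
      exact ⟨a + (i : ℕ), ⟨by omega, by omega⟩, rfl⟩
  · intro i j
    have hi : (i : ℕ) ≤ b - a := by omega
    have hj : (j : ℕ) ≤ b - a := by omega
    rw [th_adj hN (by omega) (by omega)]
    omega

lemma arc_ext [NeZero N] {t : ZMod N} {a b a' b' : ℕ} (hab : a ≤ b) (hb : b < N)
    (ha'b' : a' ≤ b') (hb' : b' < N)
    (h : (Finset.Icc a b).image (fun j : ℕ => t + 2 + (j : ZMod N)) =
      (Finset.Icc a' b').image (fun j : ℕ => t + 2 + (j : ZMod N))) : a = a' ∧ b = b' := by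
  have h1 : ∀ k, k < N → ((a ≤ k ∧ k ≤ b) ↔ (a' ≤ k ∧ k ≤ b')) := by
    intro k hk
    rw [← arc_mem (t := t) hk hb, ← arc_mem (t := t) hk hb', h]
  have ha := h1 a (by omega)
  have hb2 := h1 b (by omega)
  have ha2 := h1 a' (by omega)
  have hb3 := h1 b' (by omega)
  omega

lemma image_th_subset [NeZero N] {t : ZMod N} {K L : Finset ℕ}
    (hK : ∀ k ∈ K, k < N) (hL : ∀ k ∈ L, k < N)
    (h : K.image (fun j : ℕ => t + 2 + (j : ZMod N)) ⊆
      L.image (fun j : ℕ => t + 2 + (j : ZMod N))) : K ⊆ L := by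
  intro k hk
  have := h (Finset.mem_image_of_mem _ hk)
  simp only [Finset.mem_image] at this
  obtain ⟨l, hl, hlk⟩ := this
  have := th_inj (hL l hl) (hK k hk) hlk
  subst this
  exact hl

lemma image_th_eq_iff [NeZero N] {t : ZMod N} {K L : Finset ℕ}
    (hK : ∀ k ∈ K, k < N) (hL : ∀ k ∈ L, k < N)
    (h : K.image (fun j : ℕ => t + 2 + (j : ZMod N)) =
      L.image (fun j : ℕ => t + 2 + (j : ZMod N))) : K = L :=
  Finset.Subset.antisymm (image_th_subset hK hL h.le) (image_th_subset hL hK h.ge)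

lemma image_th_sdiff [NeZero N] {t : ZMod N} {K L : Finset ℕ}
    (hK : ∀ k ∈ K, k < N) (hL : ∀ k ∈ L, k < N) :
    K.image (fun j : ℕ => t + 2 + (j : ZMod N)) \ L.image (fun j : ℕ => t + 2 + (j : ZMod N)) =
      (K \ L).image (fun j : ℕ => t + 2 + (j : ZMod N)) := by
  ext x
  simp only [Finset.mem_sdiff, Finset.mem_image]
  constructor
  · rintro ⟨⟨k, hk, rfl⟩, hx⟩
    exact ⟨k, ⟨hk, fun hkL => hx ⟨k, hkL, rfl⟩⟩, rfl⟩
  · rintro ⟨k, ⟨hk1, hk2⟩, rfl⟩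
    refine ⟨⟨k, hk1, rfl⟩, ?_⟩
    rintro ⟨l, hl, hlk⟩
    have := th_inj (hL l hl) (hK k hk1) hlk
    subst this
    exact hk2 hl

lemma image_th_erase [NeZero N] {t : ZMod N} {K : Finset ℕ} (hK : ∀ k ∈ K, k < N)
    {s : ℕ} (hs : s < N) :
    (K.image (fun j : ℕ => t + 2 + (j : ZMod N))).erase (t + 2 + (s : ZMod N)) =
      (K.erase s).image (fun j : ℕ => t + 2 + (j : ZMod N)) := by
  ext x
  simp only [Finset.mem_erase, Finset.mem_image]
  constructor
  · rintro ⟨hx, k, hk, rfl⟩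
    exact ⟨k, ⟨fun h => hx (by rw [h]), hk⟩, rfl⟩
  · rintro ⟨k, ⟨hks, hk⟩, rfl⟩
    refine ⟨fun h => hks (th_inj (hK k hk) hs h), k, hk, rfl⟩

lemma spade_sep [NeZero N] (hN : 3 ≤ N) {t : ZMod N} {a b a' b' : ℕ}
    (hab : a ≤ b) (hb : b ≤ N - 3) (ha'b' : a' ≤ b') (hb' : b' ≤ N - 3)
    (hSp : Spade (cadj N) ((Finset.Icc a b).image (fun j : ℕ => t + 2 + (j : ZMod N)))
      ((Finset.Icc a' b').image (fun j : ℕ => t + 2 + (j : ZMod N)))) :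
    b + 2 ≤ a' ∨ b' + 2 ≤ a := by
  have hdisj : ∀ k, ¬(a ≤ k ∧ k ≤ b ∧ a' ≤ k ∧ k ≤ b') := by
    intro k hk
    have h1 : (t + 2 + (k : ZMod N)) ∈
        (Finset.Icc a b).image (fun j : ℕ => t + 2 + (j : ZMod N)) :=
      (arc_mem (by omega) (by omega)).mpr ⟨hk.1, hk.2.1⟩
    have h2 : (t + 2 + (k : ZMod N)) ∈
        (Finset.Icc a' b').image (fun j : ℕ => t + 2 + (j : ZMod N)) :=
      (arc_mem (by omega) (by omega)).mpr ⟨hk.2.2.1, hk.2.2.2⟩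
    have := Finset.mem_inter.mpr ⟨h1, h2⟩
    rw [hSp.1] at this
    exact absurd this (Finset.notMem_empty _)
  have hsep : b < a' ∨ b' < a := by
    have := hdisj a
    have := hdisj a'
    omega
  rcases hsep with hsep | hsep
  · left
    by_contra hcon
    have htouch : a' = b + 1 := by omega
    apply hSp.2
    have hun : Finset.Icc a b ∪ Finset.Icc a' b' = Finset.Icc a b' := by
      ext k
      simp only [Finset.mem_union, Finset.mem_Icc]
      omega
    rw [← Finset.image_union, hun]
    exact arc_conn hN (by omega)
  · right
    by_contra hcon
    have htouch : a = b' + 1 := by omega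
    apply hSp.2
    have hun : Finset.Icc a b ∪ Finset.Icc a' b' = Finset.Icc a' b := by
      ext k
      simp only [Finset.mem_union, Finset.mem_Icc]
      omega
    rw [← Finset.image_union, hun]
    exact arc_conn hN (by omega)

lemma prec_strict [NeZero N] (hN : 3 ≤ N) {t : ZMod N} {a b a' b' : ℕ}
    (hab : a ≤ b) (hb : b ≤ N - 3) (ha'b' : a' ≤ b') (hb' : b' ≤ N - 3)
    (hP : Prec (cadj N) ((Finset.Icc a b).image (fun j : ℕ => t + 2 + (j : ZMod N)))
      ((Finset.Icc a' b').image (fun j : ℕ => t + 2 + (j : ZMod N)))) :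
    a' < a ∧ b < b' := by
  have hbdK : ∀ k ∈ Finset.Icc a b, k < N := by
    intro k hk; rw [Finset.mem_Icc] at hk; omega
  have hbdL : ∀ k ∈ Finset.Icc a' b', k < N := by
    intro k hk; rw [Finset.mem_Icc] at hk; omega
  have hsub : Finset.Icc a b ⊆ Finset.Icc a' b' :=
    image_th_subset hbdK hbdL hP.1.subset
  have hsub1 := Finset.mem_Icc.mp (hsub (Finset.mem_Icc.mpr ⟨le_refl a, hab⟩))
  have hsub2 := Finset.mem_Icc.mp (hsub (Finset.mem_Icc.mpr ⟨hab, le_refl b⟩))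
  have hdiff := image_th_sdiff (t := t) hbdL hbdK
  have hne : a ≠ a' ∨ b ≠ b' := by
    by_contra h
    push_neg at h
    exact hP.1.ne (by rw [h.1, h.2])
  constructor
  · by_contra hcon
    have haa : a = a' := by omega
    apply hP.2
    rw [hdiff]
    have : Finset.Icc a' b' \ Finset.Icc a b = Finset.Icc (b + 1) b' := by
      ext k
      simp only [Finset.mem_sdiff, Finset.mem_Icc]
      omega
    rw [this]
    exact arc_conn hN (by omega)
  · by_contra hcon
    have hbb : b = b' := by omega
    apply hP.2
    rw [hdiff]
    have : Finset.Icc a' b' \ Finset.Icc a b = Finset.Icc a' (a - 1) := by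
      ext k
      simp only [Finset.mem_sdiff, Finset.mem_Icc]
      omega
    rw [this]
    exact arc_conn hN (by omega)

lemma mem_Iev_of_odd [NeZero N] (hN : 3 ≤ N) (hNodd : Odd N) {t : ZMod N} {s : ℕ}
    (hs : s < N - 2) (hso : Odd s) :
    (t + 2 + (s : ZMod N)) ∈ Iev (cadj N) (Finset.univ \ {t, t + 1}) := by
  have hN2 : N % 2 = 1 := Nat.odd_iff.mp hNodd
  have hs2 : s % 2 = 1 := Nat.odd_iff.mp hso
  refine ⟨?_, (Finset.Icc 0 (s - 1)).image (fun j : ℕ => t + 2 + (j : ZMod N)),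
    (Finset.Icc (s + 1) (N - 3)).image (fun j : ℕ => t + 2 + (j : ZMod N)), ?_, ?_, ?_, ?_⟩
  · rw [J_eq hN]
    exact Finset.mem_coe.mpr (Finset.mem_image_of_mem _ (Finset.mem_range.mpr hs))
  · refine ⟨arc_path hN (by omega) (by omega), ?_⟩
    rw [card_arc (by omega)]
    rw [Nat.odd_iff]
    omega
  · refine ⟨arc_path hN (by omega) (by omega), ?_⟩
    rw [card_arc (by omega)]
    rw [Nat.odd_iff]
    omega
  · constructor
    · rw [Finset.eq_empty_iff_forall_notMem]
      intro x hx
      rw [Finset.mem_inter] at hx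
      obtain ⟨h1, h2⟩ := hx
      simp only [Finset.mem_image, Finset.mem_Icc] at h1 h2
      obtain ⟨k, hk, rfl⟩ := h1
      obtain ⟨l, hl, hlk⟩ := h2
      have := th_inj (by omega) (by omega) hlk
      omega
    · exact arc_not_conn hN (a := 0) (b := s - 1) (a' := s + 1) (b' := N - 3) (g := s)
        (by omega) (by omega) (by omega) (by omega) (by omega)
  · rw [J_eq hN, image_th_erase (fun k hk => by rw [Finset.mem_range] at hk; omega) (by omega),
      ← Finset.image_union]
    congr 1
    ext k
    simp only [Finset.mem_erase, Finset.mem_range, Finset.mem_union, Finset.mem_Icc]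
    omega

lemma not_mem_Iev_of_even [NeZero N] (hN : 3 ≤ N) (hNodd : Odd N) {t : ZMod N} {s : ℕ}
    (hs : s < N - 2) (hse : Even s) :
    (t + 2 + (s : ZMod N)) ∉ Iev (cadj N) (Finset.univ \ {t, t + 1}) := by
  have hN2 : N % 2 = 1 := Nat.odd_iff.mp hNodd
  have hs2 : s % 2 = 0 := Nat.even_iff.mp hse
  rintro ⟨hmem, I', I'', hC', hC'', hSp, herase⟩
  have hsub' : I' ⊆ Finset.univ \ {t, t + 1} := by
    intro x hx
    have : x ∈ I' ∪ I'' := Finset.mem_union_left _ hx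
    rw [← herase] at this
    exact Finset.erase_subset _ _ this
  have hsub'' : I'' ⊆ Finset.univ \ {t, t + 1} := by
    intro x hx
    have : x ∈ I' ∪ I'' := Finset.mem_union_right _ hx
    rw [← herase] at this
    exact Finset.erase_subset _ _ this
  obtain ⟨a, b, hab, hbN, harc⟩ := exists_arc hN hC'.1 hsub'
  obtain ⟨a', b', ha'b', hb'N, harc'⟩ := exists_arc hN hC''.1 hsub''
  have hoddb : (b + 1 - a) % 2 = 1 := by
    rw [← Nat.odd_iff, ← card_arc (t := t) (a := a) (by omega : b < N), ← harc]
    exact hC'.2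
  have hoddb' : (b' + 1 - a') % 2 = 1 := by
    rw [← Nat.odd_iff, ← card_arc (t := t) (a := a') (by omega : b' < N), ← harc']
    exact hC''.2
  have hKeq : (Finset.range (N - 2)).erase s = Finset.Icc a b ∪ Finset.Icc a' b' := by
    apply image_th_eq_iff (t := t)
    · intro k hk
      rw [Finset.mem_erase, Finset.mem_range] at hk
      omega
    · intro k hk
      rw [Finset.mem_union, Finset.mem_Icc, Finset.mem_Icc] at hk
      omega
    · rw [← image_th_erase (fun k hk => by rw [Finset.mem_range] at hk; omega) (by omega),
        ← J_eq hN, Finset.image_union, ← harc, ← harc']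
      exact herase
  have hiff : ∀ k, (a ≤ k ∧ k ≤ b ∨ a' ≤ k ∧ k ≤ b') ↔ (k < N - 2 ∧ k ≠ s) := by
    intro k
    have := Finset.ext_iff.mp hKeq k
    simp only [Finset.mem_erase, Finset.mem_range, Finset.mem_union, Finset.mem_Icc] at this
    tauto
  have hdisj : ∀ k, ¬(a ≤ k ∧ k ≤ b ∧ a' ≤ k ∧ k ≤ b') := by
    intro k hk
    have h1 : (t + 2 + (k : ZMod N)) ∈ I' := by
      rw [harc]; exact (arc_mem (by omega) (by omega)).mpr ⟨hk.1, hk.2.1⟩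
    have h2 : (t + 2 + (k : ZMod N)) ∈ I'' := by
      rw [harc']; exact (arc_mem (by omega) (by omega)).mpr ⟨hk.2.2.1, hk.2.2.2⟩
    have := Finset.mem_inter.mpr ⟨h1, h2⟩
    rw [hSp.1] at this
    exact absurd this (Finset.notMem_empty _)
  have hkey : b + 1 = a' ∨ b' + 1 = a := by
    have h0 := hiff 0
    have h1 := hiff (b + 1)
    have h2 := hiff (b' + 1)
    have h3 := hiff b
    have h4 := hiff b'
    have d1 := hdisj a
    have d2 := hdisj a'
    omega
  apply hSp.2
  rw [harc, harc', ← Finset.image_union]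
  rcases hkey with hk | hk
  · have hun : Finset.Icc a b ∪ Finset.Icc a' b' = Finset.Icc a b' := by
      ext k
      simp only [Finset.mem_union, Finset.mem_Icc]
      omega
    rw [hun]
    exact arc_conn hN (by omega)
  · have hun : Finset.Icc a b ∪ Finset.Icc a' b' = Finset.Icc a' b := by
      ext k
      simp only [Finset.mem_union, Finset.mem_Icc]
      omega
    rw [hun]
    exact arc_conn hN (by omega)

lemma natCast_zmod2 (c : ℕ) : ((c : ℕ) : ZMod 2) = ((c % 2 : ℕ) : ZMod 2) := by
  conv_lhs => rw [← Nat.mod_add_div c 2]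
  push_cast
  rw [show (2 : ZMod 2) = 0 by decide]
  ring

lemma eSum_apply [NeZero N] (F : Finset (ZMod N)) (x : ZMod N) :
    eSum (eVec N) F x = if x ∈ F then 1 else 0 := by
  simp [eSum, eVec, Finset.sum_apply, Pi.single_apply]

lemma main14 (hN : 3 ≤ N) [NeZero N] (hodd : Odd N) (t : ZMod N)
    (B : Finset (Finset (ZMod N))) (hB : B ∈ phiSet (cadj N))
    (h1 : suppB B ∩ ({t, t + 1} : Finset (ZMod N)) = ∅) (h2 : B.card = (N - 1) / 2) :
    piQ N (eSum (eVec N)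
      (IoddF (cadj N) (Finset.univ \ ({t, t + 1} : Finset (ZMod N))))) ∈ LB (ebar N) B := by
  classical
  obtain ⟨hcal, hP0, _⟩ := hB
  have hN2 : N % 2 = 1 := Nat.odd_iff.mp hodd
  have hBsub : ∀ I ∈ B, I ⊆ Finset.univ \ {t, t + 1} := by
    intro I hI x hx
    simp only [Finset.mem_sdiff, Finset.mem_univ, true_and]
    intro hmem
    have hxs : x ∈ suppB B := Finset.mem_biUnion.mpr ⟨I, hI, hx⟩
    have hin : x ∈ suppB B ∩ ({t, t + 1} : Finset (ZMod N)) :=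
      Finset.mem_inter.mpr ⟨hxs, hmem⟩
    rw [h1] at hin
    exact absurd hin (Finset.notMem_empty x)
  have hchoice : ∀ I : Finset (ZMod N), ∃ p : ℕ × ℕ, I ∈ B → (p.1 ≤ p.2 ∧ p.2 ≤ N - 3 ∧
      I = (Finset.Icc p.1 p.2).image (fun j : ℕ => t + 2 + (j : ZMod N))) := by
    intro I
    by_cases hI : I ∈ B
    · obtain ⟨a, b, h⟩ := exists_arc hN (hcal I hI).1 (hBsub I hI)
      exact ⟨(a, b), fun _ => h⟩
    · exact ⟨(0, 0), fun h => absurd h hI⟩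
  choose P hP using hchoice
  set av : Finset (ZMod N) → ℕ := fun I => (P I).1 with hav
  set bv : Finset (ZMod N) → ℕ := fun I => (P I).2 with hbv
  have hab : ∀ I ∈ B, av I ≤ bv I := fun I hI => (hP I hI).1
  have hbN : ∀ I ∈ B, bv I ≤ N - 3 := fun I hI => (hP I hI).2.1
  have harc : ∀ I ∈ B, I = (Finset.Icc (av I) (bv I)).image
      (fun j : ℕ => t + 2 + (j : ZMod N)) := fun I hI => (hP I hI).2.2
  have hpair : ∀ I ∈ B, ∀ I' ∈ B, I ≠ I' →
      (bv I + 2 ≤ av I' ∨ bv I' + 2 ≤ av I ∨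
       (av I' < av I ∧ bv I < bv I') ∨ (av I < av I' ∧ bv I' < bv I)) := by
    intro I hI I' hI' hne
    rcases hP0 I hI I' hI' with h | h | h | h
    · exact absurd h hne
    · rw [harc I hI, harc I' hI'] at h
      rcases spade_sep hN (hab I hI) (hbN I hI) (hab I' hI') (hbN I' hI') h with h | h
      · exact Or.inl h
      · exact Or.inr (Or.inl h)
    · rw [harc I hI, harc I' hI'] at h
      have := prec_strict hN (hab I hI) (hbN I hI) (hab I' hI') (hbN I' hI') h
      exact Or.inr (Or.inr (Or.inl this))
    · rw [harc I hI, harc I' hI'] at h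
      have := prec_strict hN (hab I' hI') (hbN I' hI') (hab I hI) (hbN I hI) h
      exact Or.inr (Or.inr (Or.inr ⟨this.1, this.2⟩))
  have hAinj : Set.InjOn av ↑B := by
    intro I hI I' hI' heq
    by_contra hne
    have h1 := hab I hI
    have h2 := hab I' hI'
    rcases hpair I hI I' hI' hne with h | h | h | h <;> omega
  have hBinj : Set.InjOn (fun I => bv I + 1) ↑B := by
    intro I hI I' hI' heq
    by_contra hne
    simp only at heq
    have h1 := hab I hI
    have h2 := hab I' hI'
    rcases hpair I hI I' hI' hne with h | h | h | h <;> omega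
  set MA : Finset ℕ := B.image av with hMA
  set MB : Finset ℕ := B.image (fun I => bv I + 1) with hMB
  have hdisjM : ∀ m, m ∈ MA → m ∈ MB → False := by
    intro m hma hmb
    rw [hMA, Finset.mem_image] at hma
    rw [hMB, Finset.mem_image] at hmb
    obtain ⟨I, hI, hIm⟩ := hma
    obtain ⟨I', hI', hI'm⟩ := hmb
    have h1 := hab I hI
    have h2 := hab I' hI'
    by_cases hne : I = I'
    · subst hne; omega
    · rcases hpair I hI I' hI' hne with h | h | h | h <;> omega
  have hcardMA : MA.card = B.card := Finset.card_image_of_injOn hAinj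
  have hcardMB : MB.card = B.card := Finset.card_image_of_injOn hBinj
  have hcard2 : 2 * B.card = N - 1 := by omega
  have hsubR : MA ∪ MB ⊆ Finset.range (N - 1) := by
    intro m hm
    rw [Finset.mem_union] at hm
    rw [Finset.mem_range]
    rcases hm with hm | hm
    · rw [hMA, Finset.mem_image] at hm
      obtain ⟨I, hI, rfl⟩ := hm
      have := hab I hI
      have := hbN I hI
      omega
    · rw [hMB, Finset.mem_image] at hm
      obtain ⟨I, hI, rfl⟩ := hm
      have := hbN I hI
      omega
  have hdisjM' : Disjoint MA MB := by
    rw [Finset.disjoint_left]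
    intro m hma hmb
    exact hdisjM m hma hmb
  have hMeq : MA ∪ MB = Finset.range (N - 1) := by
    apply Finset.eq_of_subset_of_card_le hsubR
    rw [Finset.card_union_of_disjoint hdisjM', hcardMA, hcardMB, Finset.card_range]
    omega
  -- the counting lemma
  have hcount : ∀ s : ℕ, s < N - 2 →
      (B.filter (fun I => (t + 2 + (s : ZMod N)) ∈ I)).card % 2 = (s + 1) % 2 := by
    intro s hs
    have hmemiff : ∀ I ∈ B, ((t + 2 + (s : ZMod N)) ∈ I ↔ (av I ≤ s ∧ s ≤ bv I)) := by
      intro I hI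
      conv_lhs => rw [harc I hI]
      exact arc_mem (N := N) (t := t) (a := av I) (k := s) (b := bv I) (by omega)
        (by have := hbN I hI; omega)
    set F1s := B.filter (fun I => av I ≤ s) with hF1
    set F2s := B.filter (fun I => bv I + 1 ≤ s) with hF2
    set Cs := B.filter (fun I => (t + 2 + (s : ZMod N)) ∈ I) with hCs
    have hsplit : F1s.card = Cs.card + F2s.card := by
      have hun : F1s = Cs ∪ F2s := by
        ext I
        simp only [hF1, hCs, hF2, Finset.mem_filter, Finset.mem_union]
        constructor
        · rintro ⟨hI, hle⟩
          by_cases hbs : bv I + 1 ≤ s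
          · exact Or.inr ⟨hI, hbs⟩
          · exact Or.inl ⟨hI, (hmemiff I hI).mpr ⟨hle, by omega⟩⟩
        · rintro (⟨hI, hmem⟩ | ⟨hI, hbs⟩)
          · exact ⟨hI, ((hmemiff I hI).mp hmem).1⟩
          · exact ⟨hI, by have := hab I hI; omega⟩
      have hdd : Disjoint Cs F2s := by
        rw [Finset.disjoint_left]
        intro I hIc hIf
        rw [hCs, Finset.mem_filter] at hIc
        rw [hF2, Finset.mem_filter] at hIf
        have := ((hmemiff I hIc.1).mp hIc.2).2
        omega
      rw [hun, Finset.card_union_of_disjoint hdd]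
    have himg1 : F1s.image av = MA.filter (· ≤ s) := by
      ext m
      simp only [hF1, hMA, Finset.mem_image, Finset.mem_filter]
      constructor
      · rintro ⟨I, hI, rfl⟩
        exact ⟨⟨I, hI.1, rfl⟩, hI.2⟩
      · rintro ⟨⟨I, hI, rfl⟩, hm⟩
        exact ⟨I, ⟨hI, hm⟩, rfl⟩
    have himg2 : F2s.image (fun I => bv I + 1) = MB.filter (· ≤ s) := by
      ext m
      simp only [hF2, hMB, Finset.mem_image, Finset.mem_filter]
      constructor
      · rintro ⟨I, hI, rfl⟩
        exact ⟨⟨I, hI.1, rfl⟩, by have := hI.2; omega⟩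
      · rintro ⟨⟨I, hI, rfl⟩, hm⟩
        exact ⟨I, ⟨hI, by omega⟩, rfl⟩
    have hc1 : F1s.card = (MA.filter (· ≤ s)).card := by
      rw [← himg1, Finset.card_image_of_injOn
        (hAinj.mono (Finset.coe_subset.mpr (Finset.filter_subset _ _)))]
    have hc2 : F2s.card = (MB.filter (· ≤ s)).card := by
      rw [← himg2, Finset.card_image_of_injOn
        (hBinj.mono (Finset.coe_subset.mpr (Finset.filter_subset _ _)))]
    have hAB : (MA.filter (· ≤ s)).card + (MB.filter (· ≤ s)).card = s + 1 := by
      have hdd : Disjoint (MA.filter (· ≤ s)) (MB.filter (· ≤ s)) := by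
        rw [Finset.disjoint_left]
        intro m hma hmb
        exact hdisjM m (Finset.mem_of_mem_filter _ hma) (Finset.mem_of_mem_filter _ hmb)
      rw [← Finset.card_union_of_disjoint hdd, ← Finset.filter_union, hMeq]
      have : (Finset.range (N - 1)).filter (· ≤ s) = Finset.range (s + 1) := by
        ext k
        simp only [Finset.mem_filter, Finset.mem_range]
        omega
      rw [this, Finset.card_range]
    omega
  -- main vector identity
  have hvec : eSum (eVec N) (IoddF (cadj N) (Finset.univ \ ({t, t + 1} : Finset (ZMod N)))) =
      ∑ I ∈ B, eSum (eVec N) I := by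
    funext x
    rw [eSum_apply, Finset.sum_apply]
    have hsum : ∑ I ∈ B, eSum (eVec N) I x =
        ((B.filter (fun I => x ∈ I)).card : ZMod 2) := by
      rw [Finset.sum_congr rfl (fun I _ => eSum_apply I x), Finset.sum_boole]
    rw [hsum]
    set k := (x - t - 2).val with hk
    have hxk : x = t + 2 + ((k : ℕ) : ZMod N) := th_surj t x
    have hkN : k < N := ZMod.val_lt _
    by_cases hks : k < N - 2
    · -- x is a vertex of the path J
      have hxJ : x ∈ Finset.univ \ ({t, t + 1} : Finset (ZMod N)) := by
        rw [J_eq hN]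
        rw [hxk]
        exact Finset.mem_image_of_mem _ (Finset.mem_range.mpr hks)
      have hcnt := hcount k hks
      rw [← hxk] at hcnt
      by_cases hke : Even k
      · have hnotIev : x ∉ Iev (cadj N) (Finset.univ \ ({t, t + 1} : Finset (ZMod N))) := by
          rw [hxk]
          exact not_mem_Iev_of_even hN hodd hks hke
        have hmemIodd : x ∈ IoddF (cadj N) (Finset.univ \ ({t, t + 1} : Finset (ZMod N))) := by
          rw [IoddF, Finset.mem_filter]
          exact ⟨hxJ, hnotIev⟩
        rw [if_pos hmemIodd]
        have hmod : (B.filter (fun I => x ∈ I)).card % 2 = 1 := by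
          rw [hcnt]
          have := Nat.even_iff.mp hke
          omega
        rw [natCast_zmod2, hmod]
        norm_num
      · have hko : Odd k := Nat.odd_iff.mpr (by rw [Nat.even_iff] at hke; omega)
        have hIev : x ∈ Iev (cadj N) (Finset.univ \ ({t, t + 1} : Finset (ZMod N))) := by
          rw [hxk]
          exact mem_Iev_of_odd hN hodd hks hko
        have hnotIodd : x ∉ IoddF (cadj N) (Finset.univ \ ({t, t + 1} : Finset (ZMod N))) := by
          rw [IoddF, Finset.mem_filter]
          rintro ⟨-, h⟩
          exact h hIev
        rw [if_neg hnotIodd]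
        have hmod : (B.filter (fun I => x ∈ I)).card % 2 = 0 := by
          rw [hcnt]
          have := Nat.odd_iff.mp hko
          omega
        rw [natCast_zmod2, hmod]
        norm_num
    · -- x = t or x = t + 1
      have hxt : x = t ∨ x = t + 1 := by
        have hk12 : k = N - 2 ∨ k = N - 1 := by omega
        rcases hk12 with h | h
        · left; rw [hxk, h, th_t hN]
        · right; rw [hxk, h, th_t1 hN]
      have hnotJ : x ∉ Finset.univ \ ({t, t + 1} : Finset (ZMod N)) := by
        intro h
        rw [Finset.mem_sdiff] at h
        rcases hxt with h' | h'
        · exact h.2 (by rw [h']; simp)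
        · exact h.2 (by rw [h']; simp)
      have hnotIodd : x ∉ IoddF (cadj N) (Finset.univ \ ({t, t + 1} : Finset (ZMod N))) := by
        rw [IoddF, Finset.mem_filter]
        rintro ⟨h, -⟩
        exact hnotJ h
      rw [if_neg hnotIodd]
      have hemp : B.filter (fun I => x ∈ I) = ∅ := by
        rw [Finset.eq_empty_iff_forall_notMem]
        intro I hI
        rw [Finset.mem_filter] at hI
        exact hnotJ (hBsub I hI.1 hI.2)
      rw [hemp]
      simp
  rw [hvec, map_sum]
  apply Submodule.sum_mem
  intro I hI
  have heq : (piQ N) (eSum (eVec N) I) = eSum (ebar N) I := by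
    rw [eSum, map_sum]
    rfl
  rw [heq]
  exact Submodule.subset_span ⟨I, Finset.mem_coe.mpr hI, rfl⟩

end Stmt14Aux

/-- if `supp(B) ∩ ee = ∅` and `|B| = (N-1)/2` then `[ee] ∈ L_B`. -/
theorem statement14 (N : ℕ) [NeZero N] (hN : 3 ≤ N) (hodd : Odd N)
    (t t' : ZMod N) (hadj : cadj N t t')
    (B : Finset (Finset (ZMod N))) (hB : B ∈ phiSet (cadj N))
    (h1 : suppB B ∩ ({t, t'} : Finset (ZMod N)) = ∅) (h2 : B.card = (N - 1) / 2) :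
    piQ N (eSum (eVec N)
      (IoddF (cadj N) (Finset.univ \ ({t, t'} : Finset (ZMod N))))) ∈ LB (ebar N) B := by
  rcases hadj with h | h
  · subst h
    exact main14 hN hodd t B hB h1 h2
  · have hpair : ({t, t'} : Finset (ZMod N)) = {t', t' + 1} := by
      rw [h]; exact Finset.pair_comm _ _
    rw [hpair] at h1 ⊢
    exact main14 hN hodd t' B hB h1 h2
end

section
/- Let N ≥ 3 be odd, (S,E) the cycle of length N, and Vbar = V/(F·e_S). For every B in phi(Vbar), eps(B) = v_1(B) + v_3(B) + v_5(B) + … (a finite sum over odd layer indices k). -/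
section Aux15

variable {S : Type} [DecidableEq S]

lemma restB_subset (B : Finset (Finset S)) : ∀ k, restB B k ⊆ B
  | 0 => Finset.Subset.refl B
  | k + 1 => Finset.sdiff_subset.trans (restB_subset B k)

lemma maxElts_subset (C : Finset (Finset S)) : maxElts C ⊆ C := Finset.filter_subset _ _

lemma maxElts_eq_sdiff (B : Finset (Finset S)) (k : ℕ) :
    maxElts (restB B k) = restB B k \ restB B (k + 1) := by
  have h : restB B (k+1) = restB B k \ maxElts (restB B k) := rfl
  rw [h, Finset.sdiff_sdiff_self_left, Finset.inter_eq_right.mpr (maxElts_subset _)]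

/-- The rank of `I` in the chain of elements of `B` containing `s`. -/
def rnkC (B : Finset (Finset S)) (s : S) (I : Finset S) : ℕ :=
  ((B.filter (fun J => s ∈ J)).filter (fun J => I ⊆ J)).card

lemma rnk_pos {B : Finset (Finset S)} {s : S} {I : Finset S} (hI : I ∈ B) (hs : s ∈ I) :
    1 ≤ rnkC B s I := by
  refine Finset.card_pos.mpr ⟨I, ?_⟩
  simp [Finset.mem_filter, hI, hs]

lemma rnk_le (B : Finset (Finset S)) (s : S) (I : Finset S) : rnkC B s I ≤ gs B s :=
  Finset.card_le_card (Finset.filter_subset _ _)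

lemma rnk_lt_of_ssubset {B : Finset (Finset S)} {s : S} {I I' : Finset S}
    (hI : I ∈ B) (hs : s ∈ I) (hI' : I' ∈ B) (hss : I ⊂ I') :
    rnkC B s I' < rnkC B s I := by
  apply Finset.card_lt_card
  have hsub : (B.filter (fun J => s ∈ J)).filter (fun J => I' ⊆ J) ⊆
      (B.filter (fun J => s ∈ J)).filter (fun J => I ⊆ J) := by
    intro J hJ
    simp only [Finset.mem_filter] at hJ ⊢
    exact ⟨hJ.1, hss.subset.trans hJ.2⟩
  refine ⟨hsub, fun hsub' => ?_⟩
  have hmem : I ∈ (B.filter (fun J => s ∈ J)).filter (fun J => I ⊆ J) := by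
    simp [Finset.mem_filter, hI, hs]
  have := hsub' hmem
  simp only [Finset.mem_filter] at this
  exact hss.not_subset this.2

/-- A "chain" hypothesis derived from (P0). -/
def ChainHyp (B : Finset (Finset S)) : Prop :=
  ∀ I ∈ B, ∀ I' ∈ B, I = I' ∨ I ∩ I' = ∅ ∨ I ⊂ I' ∨ I' ⊂ I

lemma chain_tricho {B : Finset (Finset S)} (hch : ChainHyp B) {s : S} {I I' : Finset S}
    (hI : I ∈ B) (hs : s ∈ I) (hI' : I' ∈ B) (hs' : s ∈ I') :
    I = I' ∨ I ⊂ I' ∨ I' ⊂ I := by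
  rcases hch I hI I' hI' with h | h | h | h
  · exact Or.inl h
  · exact absurd (Finset.mem_inter.mpr ⟨hs, hs'⟩) (by simp [h])
  · exact Or.inr (Or.inl h)
  · exact Or.inr (Or.inr h)

lemma rnk_injOn {B : Finset (Finset S)} (hch : ChainHyp B) {s : S} {I I' : Finset S}
    (hI : I ∈ B) (hs : s ∈ I) (hI' : I' ∈ B) (hs' : s ∈ I')
    (h : rnkC B s I = rnkC B s I') : I = I' := by
  rcases chain_tricho hch hI hs hI' hs' with he | hss | hss
  · exact he
  · exact absurd h (by have := rnk_lt_of_ssubset hI hs hI' hss; omega)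
  · exact absurd h (by have := rnk_lt_of_ssubset hI' hs' hI hss; omega)

lemma rnk_surj {B : Finset (Finset S)} (hch : ChainHyp B) (s : S) (k : ℕ)
    (hk1 : 1 ≤ k) (hkg : k ≤ gs B s) : ∃ I ∈ B, s ∈ I ∧ rnkC B s I = k := by
  classical
  set Cs := B.filter (fun J => s ∈ J) with hCs
  have him : Cs.image (rnkC B s) = Finset.Icc 1 Cs.card := by
    have hinj : Set.InjOn (rnkC B s) Cs := by
      intro I hI I' hI' h
      simp only [hCs, Finset.coe_filter, Set.mem_setOf_eq] at hI hI'
      exact rnk_injOn hch hI.1 hI.2 hI'.1 hI'.2 h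
    have hcard : (Cs.image (rnkC B s)).card = Cs.card := Finset.card_image_of_injOn hinj
    have hsub : Cs.image (rnkC B s) ⊆ Finset.Icc 1 Cs.card := by
      intro n hn
      obtain ⟨I, hI, rfl⟩ := Finset.mem_image.mp hn
      simp only [hCs, Finset.mem_filter] at hI
      exact Finset.mem_Icc.mpr ⟨rnk_pos hI.1 hI.2, rnk_le B s I⟩
    refine Finset.eq_of_subset_of_card_le hsub ?_
    rw [hcard, Nat.card_Icc]
    omega
  have hk : k ∈ Cs.image (rnkC B s) := by
    rw [him, Finset.mem_Icc]
    exact ⟨hk1, by simpa [gs, hCs] using hkg⟩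
  obtain ⟨I, hI, hrI⟩ := Finset.mem_image.mp hk
  simp only [hCs, Finset.mem_filter] at hI
  exact ⟨I, hI.1, hI.2, hrI⟩

lemma mem_restB_iff {B : Finset (Finset S)} (hch : ChainHyp B) (s : S) :
    ∀ k, ∀ I ∈ B, s ∈ I → (I ∈ restB B k ↔ k < rnkC B s I) := by
  intro k
  induction k with
  | zero =>
    intro I hI hs
    simp [restB, hI]
    exact rnk_pos hI hs
  | succ k ih =>
    intro I hI hs
    have hstep : restB B (k+1) = restB B k \ maxElts (restB B k) := rfl
    rw [hstep, Finset.mem_sdiff]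
    constructor
    · rintro ⟨hrest, hnmax⟩
      have hk : k < rnkC B s I := (ih I hI hs).mp hrest
      rcases Nat.lt_or_ge (k+1) (rnkC B s I) with h | h
      · exact h
      · exfalso
        apply hnmax
        have hr : rnkC B s I = k + 1 := by omega
        refine Finset.mem_filter.mpr ⟨hrest, ?_⟩
        intro J hJ hIJ
        have hJB : J ∈ B := restB_subset B k hJ
        have hsJ : s ∈ J := hIJ.subset hs
        have h1 : k < rnkC B s J := (ih J hJB hsJ).mp hJ
        have h2 := rnk_lt_of_ssubset hI hs hJB hIJ
        omega
    · intro h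
      have hrest : I ∈ restB B k := (ih I hI hs).mpr (by omega)
      refine ⟨hrest, fun hmax => ?_⟩
      obtain ⟨J, hJB, hsJ, hrJ⟩ := rnk_surj hch s (k+1) (by omega)
        (le_trans (by omega) (rnk_le B s I))
      have hne : I ≠ J := fun he => by rw [he] at h; omega
      have hss : I ⊂ J := by
        rcases chain_tricho hch hI hs hJB hsJ with he | hss | hss
        · exact absurd he hne
        · exact hss
        · exact absurd (rnk_lt_of_ssubset hJB hsJ hI hss) (by omega)
      have hJrest : J ∈ restB B k := (ih J hJB hsJ).mpr (by omega)
      exact (Finset.mem_filter.mp hmax).2 J hJrest hss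

lemma mem_maxElts_iff_rnk {B : Finset (Finset S)} (hch : ChainHyp B) (s : S) (j : ℕ)
    {I : Finset S} (hI : I ∈ B) (hs : s ∈ I) :
    I ∈ maxElts (restB B j) ↔ rnkC B s I = j + 1 := by
  rw [maxElts_eq_sdiff, Finset.mem_sdiff, mem_restB_iff hch s j I hI hs,
    mem_restB_iff hch s (j+1) I hI hs]
  omega

lemma layer_card {B : Finset (Finset S)} (hch : ChainHyp B) (s : S) (k : ℕ) (hk : 1 ≤ k) :
    ((maxElts (restB B (k-1))).filter (fun I => s ∈ I)).card
      = if k ≤ gs B s then 1 else 0 := by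
  classical
  obtain ⟨j, rfl⟩ : ∃ j, k = j + 1 := ⟨k - 1, by omega⟩
  have hj : j + 1 - 1 = j := by omega
  rw [hj]
  split_ifs with hle
  · obtain ⟨I₀, hI₀B, hsI₀, hr₀⟩ := rnk_surj hch s (j+1) (by omega) hle
    rw [Finset.card_eq_one]
    refine ⟨I₀, ?_⟩
    ext I
    simp only [Finset.mem_filter, Finset.mem_singleton]
    constructor
    · rintro ⟨hmax, hsI⟩
      have hIB : I ∈ B := restB_subset B j (maxElts_subset _ hmax)
      have hr := (mem_maxElts_iff_rnk hch s j hIB hsI).mp hmax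
      exact rnk_injOn hch hIB hsI hI₀B hsI₀ (by omega)
    · rintro rfl
      exact ⟨(mem_maxElts_iff_rnk hch s j hI₀B hsI₀).mpr hr₀, hsI₀⟩
  · rw [Finset.card_eq_zero, Finset.filter_eq_empty_iff]
    intro I hmax hsI
    have hIB : I ∈ B := restB_subset B j (maxElts_subset _ hmax)
    have hr := (mem_maxElts_iff_rnk hch s j hIB hsI).mp hmax
    have := rnk_le B s I
    omega

lemma sum_eSum {V : Type} [AddCommGroup V] [Module (ZMod 2) V] [Fintype S]
    (C : Finset (Finset S)) (e : S → V) :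
    ∑ I ∈ C, eSum e I = ∑ s : S, ((C.filter (fun I => s ∈ I)).card) • e s := by
  classical
  calc ∑ I ∈ C, eSum e I
      = ∑ I ∈ C, ∑ s ∈ Finset.univ, (if s ∈ I then e s else 0) := by
        refine Finset.sum_congr rfl fun I _ => ?_
        rw [Finset.sum_ite_mem, Finset.univ_inter]; rfl
    _ = ∑ s : S, ∑ I ∈ C, (if s ∈ I then e s else 0) := Finset.sum_comm
    _ = ∑ s : S, ((C.filter (fun I => s ∈ I)).card) • e s := by
        refine Finset.sum_congr rfl fun s _ => ?_
        rw [Finset.sum_ite, Finset.sum_const, Finset.sum_const_zero, add_zero]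

lemma cast2 (n : ℕ) : ((n : ℕ) : ZMod 2) = if Odd n then 1 else 0 := by
  rw [← ZMod.natCast_mod]
  rcases Nat.even_or_odd n with h | h
  · rw [Nat.even_iff.mp h]
    simp [Nat.not_odd_iff_even.mpr h]
  · rw [Nat.odd_iff.mp h]
    simp [h]

lemma tri_succ (g : ℕ) : (g+1)*(g+2)/2 = g*(g+1)/2 + (g+1) := by
  obtain ⟨t, ht⟩ := Nat.even_mul_succ_self g
  have h2 : (g+1)*(g+2) = g*(g+1) + 2*(g+1) := by ring
  omega

lemma count_lemma (g : ℕ) :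
    ((g*(g+1)/2 : ℕ) : ZMod 2)
      = ((((Finset.range (g+1)).filter (fun k => Odd k)).card : ℕ) : ZMod 2) := by
  induction g with
  | zero => decide
  | succ g ih =>
    have h1 : (g+1)*(g+1+1)/2 = g*(g+1)/2 + (g+1) := tri_succ g
    rw [h1, Nat.cast_add, Finset.range_add_one, Finset.filter_insert, cast2 (g+1)]
    by_cases h : Odd (g+1)
    · rw [if_pos h, if_pos h, Finset.card_insert_of_notMem (by simp), ih]
      push_cast
      ring
    · rw [if_neg h, if_neg h, ih, add_zero]

end Aux15

/-- `eps(B) = v_1(B) + v_3(B) + v_5(B) + …`, the sum of the layer vectors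
`v_k(B) = ∑_{I ∈ B_k} ebar_I` over odd layer indices `k`. -/
theorem statement15 (N : ℕ) [NeZero N] (hN : 3 ≤ N) (hodd : Odd N)
    (B : Finset (Finset (ZMod N))) (hB : B ∈ phiSet (cadj N)) :
    epsB (ebar N) B =
      ∑ k ∈ (Finset.range (B.card + 1)).filter (fun k => Odd k),
        ∑ I ∈ maxElts (restB B (k - 1)), eSum (ebar N) I := by
  classical
  obtain ⟨hcal, hP0, hP1⟩ := hB
  have hch : ChainHyp B := by
    intro I hI I' hI'
    rcases hP0 I hI I' hI' with h | h | h | h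
    · exact Or.inl h
    · exact Or.inr (Or.inl h.1)
    · exact Or.inr (Or.inr (Or.inl h.1))
    · exact Or.inr (Or.inr (Or.inr h.1))
  have hRHS : ∀ k ∈ (Finset.range (B.card + 1)).filter (fun k => Odd k),
      ∑ I ∈ maxElts (restB B (k - 1)), eSum (ebar N) I
        = ∑ s : ZMod N, (if k ≤ gs B s then 1 else 0 : ℕ) • ebar N s := by
    intro k hk
    have hk1 : 1 ≤ k := ((Finset.mem_filter.mp hk).2).pos
    rw [sum_eSum]
    exact Finset.sum_congr rfl fun s _ => by rw [layer_card hch s k hk1]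
  rw [Finset.sum_congr rfl hRHS, Finset.sum_comm]
  unfold epsB
  refine Finset.sum_congr rfl fun s _ => ?_
  have hg : gs B s ≤ B.card := Finset.card_filter_le _ _
  rw [← Finset.sum_smul, ← Nat.cast_smul_eq_nsmul (ZMod 2)]
  congr 1
  have hcard : (∑ k ∈ (Finset.range (B.card + 1)).filter (fun k => Odd k),
      (if k ≤ gs B s then 1 else 0 : ℕ))
        = (((Finset.range (B.card + 1)).filter (fun k => Odd k)).filter
            (fun k => k ≤ gs B s)).card := (Finset.card_filter _ _).symm
  have hset : (((Finset.range (B.card + 1)).filter (fun k => Odd k)).filter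
      (fun k => k ≤ gs B s))
        = (Finset.range (gs B s + 1)).filter (fun k => Odd k) := by
    ext k
    simp only [Finset.mem_filter, Finset.mem_range]
    constructor
    · rintro ⟨⟨hk, ho⟩, hle⟩
      exact ⟨by omega, ho⟩
    · rintro ⟨hk, ho⟩
      exact ⟨⟨by omega, ho⟩, by omega⟩
  rw [hcard, hset, ← count_lemma]
end
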